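/- arXiv:0706.0195 — 8 statements merged into one kernel-verified Lean document; each statement's English description precedes it below -/
import Mathlib

section
/- Let C be a clone on a finite set A for which ≡_C has finitely many classes, and let B be a nonempty subset of A preserved by every operation in C. Then the restriction clone C|_B on B also has finitely many ≡_{C|_B}-classes. -/
/-- An `n`-indexed operation on `A` has arity `n + 1` (so arities are ≥ 1). -/
abbrev Op (A : Type) (n : ℕ) := (Fin (n + 1) → A) → A

/-- A clone on `A`: a set of finitary operations containing all projections
and closed under composition. -/
structure Clone (A : Type) where
  ops : ∀ n : ℕ, Set (Op A n)
  proj_mem : ∀ (n : ℕ) (i : Fin (n + 1)), (fun x => x i) ∈ ops n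
  comp_mem : ∀ {m n : ℕ} (g : Op A m) (h : Fin (m + 1) → Op A n),
      g ∈ ops m → (∀ i, h i ∈ ops n) → (fun x => g fun i => h i x) ∈ ops n

/-- The set `O_A` of all finitary operations on `A`, of all arities. -/
def Ops (A : Type) := Σ n : ℕ, Op A n

/-- `Minor C f g` : `f` is a `C`-minor of `g`, i.e. `f = g ∘ h` for a tuple `h`
of operations from `C`. -/
def Minor {A : Type} (C : Clone A) (f g : Ops A) : Prop :=
  ∃ h : Fin (g.1 + 1) → Op A f.1,
    (∀ i, h i ∈ C.ops f.1) ∧ f.2 = fun x => g.2 fun i => h i x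

/-- `C`-equivalence: each of `f`, `g` is a `C`-minor of the other. -/
def CEquiv {A : Type} (C : Clone A) (f g : Ops A) : Prop :=
  Minor C f g ∧ Minor C g f

lemma minor_refl {A : Type} (C : Clone A) (f : Ops A) : Minor C f f :=
  ⟨fun i x => x i, fun i => C.proj_mem _ i, rfl⟩

lemma minor_trans {A : Type} (C : Clone A) {f g k : Ops A}
    (h1 : Minor C f g) (h2 : Minor C g k) : Minor C f k := by
  obtain ⟨h, hh, hf⟩ := h1
  obtain ⟨h', hh', hg⟩ := h2
  refine ⟨fun j x => h' j fun i => h i x, fun j => C.comp_mem _ _ (hh' j) hh, ?_⟩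
  funext x
  rw [hf, hg]

lemma cequiv_equivalence {A : Type} (C : Clone A) : Equivalence (CEquiv C) where
  refl f := ⟨minor_refl C f, minor_refl C f⟩
  symm h := ⟨h.2, h.1⟩
  trans h1 h2 := ⟨minor_trans C h1.1 h2.1, minor_trans C h2.2 h1.2⟩

theorem restriction_clone_finitely_many_classes {A : Type} [Finite A]
    (C : Clone A) (B : Set A) (hB : B.Nonempty)
    (hpres : ∀ n, ∀ f ∈ C.ops n, ∀ x : Fin (n + 1) → A, (∀ i, x i ∈ B) → f x ∈ B)
    (hfin : Finite (Quot (CEquiv C)))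
    (D : Clone B)
    (hD : ∀ (n : ℕ) (g : Op (↥B) n), g ∈ D.ops n ↔
      ∃ f ∈ C.ops n, ∀ x : Fin (n + 1) → B, (g x : A) = f fun i => (x i : A)) :
    Finite (Quot (CEquiv D)) := by
  classical
  obtain ⟨b0, hb0⟩ := hB
  -- retraction A → B
  let e : A → B := fun a => if h : a ∈ B then ⟨a, h⟩ else ⟨b0, hb0⟩
  have he : ∀ (a : A) (h : a ∈ B), e a = ⟨a, h⟩ := fun a h => dif_pos h
  -- lift of an operation on B to one on A
  let L : Ops (↥B) → Ops A := fun g => ⟨g.1, fun x => ((g.2 fun i => e (x i) : B) : A)⟩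
  have key : ∀ g1 g2 : Ops (↥B), Minor C (L g1) (L g2) → Minor D g1 g2 := by
    rintro ⟨n1, g1⟩ ⟨n2, g2⟩ ⟨f, hf, heq⟩
    refine ⟨fun i x => ⟨f i (fun j => (x j : A)),
        hpres _ _ (hf i) _ (fun j => (x j).2)⟩,
      fun i => (hD _ _).2 ⟨f i, hf i, fun x => rfl⟩, ?_⟩
    funext x
    have h1 := congrFun heq (fun j => ((x j : A)))
    simp only [L] at h1
    have hx : (fun i => e ((x i : A))) = x := by
      funext i; rw [he _ (x i).2]
    rw [hx] at h1
    have harg : (fun i => e (f i fun j => ((x j : A)))) =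
        fun i => (⟨f i fun j => ((x j : A)), hpres _ _ (hf i) _ (fun j => (x j).2)⟩ : B) := by
      funext i; exact he _ _
    apply Subtype.val_injective
    rw [h1, harg]
  have hinj : Function.Injective
      (fun q : Quot (CEquiv D) => Quot.mk (CEquiv C) (L q.out)) := by
    intro q1 q2 h
    have hc : CEquiv C (L q1.out) (L q2.out) :=
      ((cequiv_equivalence C).eqvGen_iff).1 (Quot.eqvGen_exact h)
    have hd : CEquiv D q1.out q2.out := ⟨key _ _ hc.1, key _ _ hc.2⟩
    calc q1 = Quot.mk _ q1.out := (Quot.out_eq q1).symm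
      _ = Quot.mk _ q2.out := Quot.sound hd
      _ = q2 := Quot.out_eq q2
  exact Finite.of_injective _ hinj
end

section
/- For any set A, two operations f, g on A are O_A-equivalent if and only if Im(f) = Im(g). Consequently, if A is finite with k elements, there are exactly 2^k − 1 O_A-equivalence classes of operations on A. -/
/-- The clone of all operations on `A`. -/
def fullClone (A : Type) : Clone A where
  ops := fun _ => Set.univ
  proj_mem := fun _ _ => Set.mem_univ _
  comp_mem := fun _ _ _ _ => Set.mem_univ _

lemma minor_iff {B : Type} (f g : Ops B) :
    Minor (fullClone B) f g ↔ Set.range f.2 ⊆ Set.range g.2 := by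
  constructor
  · rintro ⟨h, -, hf⟩
    rintro _ ⟨x, rfl⟩
    exact ⟨fun i => h i x, by rw [hf]⟩
  · intro hsub
    refine ⟨fun i x => Classical.choose (hsub ⟨x, rfl⟩) i, fun _ => trivial, ?_⟩
    funext x
    exact (Classical.choose_spec (hsub ⟨x, rfl⟩)).symm

lemma cequiv_iff {B : Type} (f g : Ops B) :
    CEquiv (fullClone B) f g ↔ Set.range f.2 = Set.range g.2 := by
  rw [CEquiv, minor_iff, minor_iff, Set.Subset.antisymm_iff]

theorem full_equiv_iff_range_eq_and_card {A : Type} [Fintype A] [Nonempty A] :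
    (∀ (B : Type) (f g : Ops B),
        CEquiv (fullClone B) f g ↔ Set.range f.2 = Set.range g.2) ∧
    Nat.card (Quot (CEquiv (fullClone A))) = 2 ^ Fintype.card A - 1 := by
  classical
  refine ⟨fun B f g => cequiv_iff f g, ?_⟩
  have e : Quot (CEquiv (fullClone A)) ≃ {s : Set A // s.Nonempty} := by
    refine Equiv.ofBijective
      (Quot.lift (fun f : Ops A => (⟨Set.range f.2, Set.range_nonempty _⟩ : {s : Set A // s.Nonempty}))
        (fun f g h => Subtype.ext ((cequiv_iff f g).mp h))) ⟨?_, ?_⟩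
    · intro x y
      induction x using Quot.ind
      induction y using Quot.ind
      intro h
      exact Quot.sound ((cequiv_iff _ _).mpr (congrArg Subtype.val h))
    · rintro ⟨s, hs⟩
      refine ⟨Quot.mk _ ⟨0, fun x => if x 0 ∈ s then x 0 else hs.choose⟩, ?_⟩
      refine Subtype.ext (Set.Subset.antisymm ?_ ?_)
      · rintro _ ⟨x, rfl⟩
        by_cases h : x 0 ∈ s <;> simp [h, hs.choose_spec]
      · intro a ha
        exact ⟨fun _ => a, by simp [ha]⟩
  rw [Nat.card_congr e]
  have : Nat.card {s : Set A // s.Nonempty} = Nat.card {s : Set A // ¬ s = ∅} := by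
    simp [Set.nonempty_iff_ne_empty, Ne]
  rw [this, Nat.card_eq_fintype_card, Fintype.card_subtype_compl,
    Fintype.card_subtype_eq (∅ : Set A)]
  simp [Fintype.card_set]
end

section
/- Let A be a finite set with |A| = k ≥ 2 and let D be the clone generated by the discriminator function on A. Then with d = k^k − k^{k−1} + 1, every operation on A is D-equivalent to a d-ary operation on A. -/
/-- The ternary discriminator as an operation of arity 3 (index 2). -/
def discOp (A : Type) [DecidableEq A] : Op A 2 :=
  fun x => if x 0 = x 1 then x 2 else x 0


namespace DiscrProof

set_option linter.dupNamespace false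
set_option linter.unusedSectionVars false
variable {A : Type} [Fintype A] [DecidableEq A]

theorem cond_mem (D : Clone A) (hD1 : discOp A ∈ D.ops 2) {n : ℕ} (i j : Fin (n+1))
    (F G : Op A n) (hF : F ∈ D.ops n) (hG : G ∈ D.ops n) :
    (fun x => if x i = x j then F x else G x) ∈ D.ops n := by
  classical
  set h1 : Fin 3 → Op A n := fun m => if m.val = 0 then (fun x => x i) else
    if m.val = 1 then (fun x => x j) else F with hh1
  set h2 : Fin 3 → Op A n := fun m => if m.val = 0 then (fun x => x i) else
    if m.val = 1 then (fun x => x j) else G with hh2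
  have m1 : (fun x => discOp A fun m => h1 m x) ∈ D.ops n := by
    apply D.comp_mem _ _ hD1
    intro m
    fin_cases m
    · exact D.proj_mem n i
    · exact D.proj_mem n j
    · exact hF
  have m2 : (fun x => discOp A fun m => h2 m x) ∈ D.ops n := by
    apply D.comp_mem _ _ hD1
    intro m
    fin_cases m
    · exact D.proj_mem n i
    · exact D.proj_mem n j
    · exact hG
  set h3 : Fin 3 → Op A n := fun m => if m.val = 0 then (fun x => discOp A fun mm => h1 mm x) else
    if m.val = 1 then (fun x => discOp A fun mm => h2 mm x) else G with hh3
  have m3 : (fun x => discOp A fun m => h3 m x) ∈ D.ops n := by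
    apply D.comp_mem _ _ hD1
    intro m
    fin_cases m
    · exact m1
    · exact m2
    · exact hG
  have key : (fun x : Fin (n+1) → A => if x i = x j then F x else G x)
      = (fun x => discOp A fun m => h3 m x) := by
    funext x
    have e1 : (discOp A fun mm => h1 mm x) = if x i = x j then F x else x i := rfl
    have e2 : (discOp A fun mm => h2 mm x) = if x i = x j then G x else x i := rfl
    have e3 : (discOp A fun m => h3 m x) =
        if (discOp A fun mm => h1 mm x) = (discOp A fun mm => h2 mm x)
          then G x else (discOp A fun mm => h1 mm x) := rfl
    rw [e3, e1, e2]
    by_cases h : x i = x j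
    · simp only [h, if_true]
      by_cases hfg : F x = G x <;> simp [hfg]
    · simp [h]
  rw [key]
  exact m3

def listMat {M : ℕ} (L : List (Fin M × Fin M)) (x : Fin M → A) : Fin M → Fin M → Bool :=
  fun i j => if (i, j) ∈ L then decide (x i = x j) else false

theorem pat_aux (D : Clone A) (hD1 : discOp A ∈ D.ops 2) {n : ℕ}
    (L : List (Fin (n+1) × Fin (n+1))) :
    ∀ σ : (Fin (n+1) → Fin (n+1) → Bool) → Fin (n+1),
    (fun x => x (σ (listMat L x))) ∈ D.ops n := by
  classical
  induction L with
  | nil =>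
    intro σ
    have : (fun x : Fin (n+1) → A => x (σ (listMat [] x)))
        = fun x => x (σ fun _ _ => false) := by
      funext x
      congr 1
    rw [this]
    exact D.proj_mem n _
  | cons p L ih =>
    intro σ
    obtain ⟨i, j⟩ := p
    set σ1 : (Fin (n+1) → Fin (n+1) → Bool) → Fin (n+1) := fun m =>
      σ (fun i' j' => if i' = i ∧ j' = j then true else m i' j') with hσ1
    set σ2 : (Fin (n+1) → Fin (n+1) → Bool) → Fin (n+1) := fun m =>
      σ (fun i' j' => if i' = i ∧ j' = j then false else m i' j') with hσ2
    have key : (fun x : Fin (n+1) → A => x (σ (listMat ((i,j) :: L) x)))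
        = fun x => if x i = x j then x (σ1 (listMat L x)) else x (σ2 (listMat L x)) := by
      funext x
      by_cases h : x i = x j
      · simp only [h, if_true, hσ1]
        congr 2
        funext i' j'
        by_cases hij : i' = i ∧ j' = j
        · obtain ⟨rfl, rfl⟩ := hij
          simp [listMat, h]
        · have : ((i', j') ∈ (i, j) :: L) ↔ ((i', j') ∈ L) := by
            simp only [List.mem_cons, Prod.mk.injEq]
            constructor
            · rintro (⟨rfl, rfl⟩ | hl)
              · exact absurd ⟨rfl, rfl⟩ hij
              · exact hl
            · exact fun hl => Or.inr hl
          simp only [listMat, hij, if_false]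
          rw [if_congr this rfl rfl]
      · simp only [h, if_false, hσ2]
        congr 2
        funext i' j'
        by_cases hij : i' = i ∧ j' = j
        · obtain ⟨rfl, rfl⟩ := hij
          simp [listMat, h]
        · have : ((i', j') ∈ (i, j) :: L) ↔ ((i', j') ∈ L) := by
            simp only [List.mem_cons, Prod.mk.injEq]
            constructor
            · rintro (⟨rfl, rfl⟩ | hl)
              · exact absurd ⟨rfl, rfl⟩ hij
              · exact hl
            · exact fun hl => Or.inr hl
          simp only [listMat, hij, if_false]
          rw [if_congr this rfl rfl]
    rw [key]
    exact cond_mem D hD1 i j _ _ (ih σ1) (ih σ2)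

theorem pattern_mem (D : Clone A) (hD1 : discOp A ∈ D.ops 2) {n : ℕ}
    (σ : (Fin (n+1) → Fin (n+1) → Bool) → Fin (n+1)) :
    (fun x => x (σ (fun i j => decide (x i = x j)))) ∈ D.ops n := by
  classical
  have := pat_aux D hD1 ((List.finRange (n+1)).product (List.finRange (n+1))) σ
  have e : (fun x : Fin (n+1) → A => x (σ (listMat ((List.finRange (n+1)).product (List.finRange (n+1))) x)))
      = fun x => x (σ (fun i j => decide (x i = x j))) := by
    funext x
    congr 2
    funext i j
    simp [listMat, List.pair_mem_product, List.mem_finRange]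
  rwa [e] at this


theorem ext_perm (S : Finset A) (u : A → A) (hu : Set.InjOn u S) :
    ∃ s : Equiv.Perm A, ∀ a ∈ S, s a = u a := by
  classical
  have hbij : Function.Bijective
      (fun a : {x // x ∈ S} => (⟨u a, Finset.mem_image_of_mem u a.2⟩ : {x // x ∈ S.image u})) := by
    constructor
    · rintro ⟨a, ha⟩ ⟨b, hb⟩ h
      have : u a = u b := congrArg Subtype.val h
      exact Subtype.ext (hu (Finset.mem_coe.mpr ha) (Finset.mem_coe.mpr hb) this)
    · rintro ⟨b, hb⟩
      obtain ⟨a, ha, rfl⟩ := Finset.mem_image.mp hb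
      exact ⟨⟨a, ha⟩, rfl⟩
  let e := Equiv.ofBijective _ hbij
  refine ⟨e.extendSubtype, fun a ha => ?_⟩
  have := Equiv.extendSubtype_apply_of_mem e a ha
  exact this

def matOf {M : ℕ} (x : Fin M → A) : Fin M → Fin M → Bool := fun i j => decide (x i = x j)

theorem matOf_iff {M : ℕ} {x x' : Fin M → A} (h : matOf x = matOf x') :
    ∀ i j, x i = x j ↔ x' i = x' j := by
  intro i j
  have := congrFun (congrFun h i) j
  simpa [matOf, decide_eq_decide] using this

theorem matOf_exists_perm {M : ℕ} (x x' : Fin M → A) (h : matOf x = matOf x') :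
    ∃ s : Equiv.Perm A, ∀ i, x' i = s (x i) := by
  classical
  have key := matOf_iff h
  set u : A → A := fun a => if h : ∃ i, x i = a then x' h.choose else a with hu
  have hval : ∀ i, u (x i) = x' i := by
    intro i
    have hex : ∃ i', x i' = x i := ⟨i, rfl⟩
    rw [hu]
    simp only [hex, dif_pos]
    exact (key _ _).mp hex.choose_spec
  have hinj : Set.InjOn u (Finset.image x Finset.univ) := by
    intro a ha b hb hab
    obtain ⟨i, _, rfl⟩ := Finset.mem_image.mp (Finset.mem_coe.mp ha)
    obtain ⟨j, _, rfl⟩ := Finset.mem_image.mp (Finset.mem_coe.mp hb)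
    rw [hval, hval] at hab
    exact (key i j).mpr hab
  obtain ⟨s, hs⟩ := ext_perm _ u hinj
  refine ⟨s, fun i => ?_⟩
  rw [hs (x i) (Finset.mem_image_of_mem x (Finset.mem_univ i)), hval]

theorem matOf_perm_comp {M : ℕ} (x : Fin M → A) (s : Equiv.Perm A) :
    matOf (fun i => s (x i)) = matOf x := by
  funext i j
  simp [matOf, decide_eq_decide]

def blockMin {M : ℕ} (x : Fin M → A) (j : Fin M) : Fin M :=
  (Finset.univ.filter (fun i => x i = x j)).min' ⟨j, by simp⟩

theorem x_blockMin {M : ℕ} (x : Fin M → A) (j : Fin M) : x (blockMin x j) = x j :=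
  (Finset.mem_filter.mp ((Finset.univ.filter (fun i => x i = x j)).min'_mem ⟨j, by simp⟩)).2

theorem blockMin_eq_iff {M : ℕ} (x : Fin M → A) (i j : Fin M) :
    blockMin x i = blockMin x j ↔ x i = x j := by
  constructor
  · intro h
    rw [← x_blockMin x i, h, x_blockMin x j]
  · intro h
    unfold blockMin
    congr 1
    ext i'
    simp [h]

def img {M : ℕ} (x : Fin M → A) : Finset (Fin M) := Finset.image (blockMin x) Finset.univ

def bOf {M : ℕ} (x : Fin M → A) : ℕ := (Finset.image x Finset.univ).card

theorem card_img {M : ℕ} (x : Fin M → A) : (img x).card = bOf x := by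
  classical
  apply Finset.card_bij (fun m _ => x m)
  · intro m hm
    exact Finset.mem_image_of_mem x (Finset.mem_univ m)
  · intro m hm m' hm' h
    obtain ⟨i, _, rfl⟩ := Finset.mem_image.mp hm
    obtain ⟨j, _, rfl⟩ := Finset.mem_image.mp hm'
    rw [x_blockMin x i, x_blockMin x j] at h
    exact (blockMin_eq_iff x i j).mpr h
  · intro a ha
    obtain ⟨j, _, rfl⟩ := Finset.mem_image.mp ha
    exact ⟨blockMin x j, Finset.mem_image_of_mem _ (Finset.mem_univ j), x_blockMin x j⟩

theorem bOf_le_card {M : ℕ} (x : Fin M → A) : bOf x ≤ Fintype.card A := by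
  classical
  calc bOf x ≤ (Finset.univ : Finset A).card := Finset.card_le_univ _
  _ = Fintype.card A := Finset.card_univ

theorem bOf_pos {M : ℕ} [NeZero M] (x : Fin M → A) : 1 ≤ bOf x := by
  classical
  refine Finset.card_pos.mpr ⟨x 0, Finset.mem_image_of_mem x (Finset.mem_univ 0)⟩


noncomputable def eA : Fin (Fintype.card A) ≃ A := (Fintype.equivFin A).symm

theorem blockMin_mem_img {M : ℕ} (x : Fin M → A) (j : Fin M) : blockMin x j ∈ img x :=
  Finset.mem_image_of_mem _ (Finset.mem_univ j)

noncomputable def rankIdx {M : ℕ} (x : Fin M → A) (j : Fin M) : Fin (img x).card :=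
  ((img x).orderIsoOfFin rfl).symm ⟨blockMin x j, blockMin_mem_img x j⟩

noncomputable def cf {M : ℕ} (x : Fin M → A) (j : Fin M) : A :=
  eA (Fin.castLE (le_trans (le_of_eq (card_img x)) (bOf_le_card x)) (rankIdx x j))

theorem cf_eq_iff {M : ℕ} (x : Fin M → A) (i j : Fin M) : cf x i = cf x j ↔ x i = x j := by
  unfold cf
  rw [Equiv.apply_eq_iff_eq]
  constructor
  · intro h
    have h2 : rankIdx x i = rankIdx x j := Fin.castLE_injective _ h
    have h3 := congrArg ((img x).orderIsoOfFin rfl) h2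
    unfold rankIdx at h3
    rw [OrderIso.apply_symm_apply, OrderIso.apply_symm_apply] at h3
    have h4 : blockMin x i = blockMin x j := congrArg Subtype.val h3
    exact (blockMin_eq_iff x i j).mp h4
  · intro h
    have h4 : blockMin x i = blockMin x j := (blockMin_eq_iff x i j).mpr h
    unfold rankIdx
    congr 2
    exact Subtype.ext h4

theorem matOf_cf {M : ℕ} (x : Fin M → A) : matOf (cf x) = matOf x := by
  funext i j
  simp [matOf, decide_eq_decide, cf_eq_iff]

theorem matOf_det_blockMin {M : ℕ} {x x' : Fin M → A} (h : matOf x = matOf x') :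
    blockMin x = blockMin x' := by
  funext j
  have hs : Finset.univ.filter (fun i => x i = x j) = Finset.univ.filter (fun i => x' i = x' j) := by
    ext i
    simp [matOf_iff h i j]
  unfold blockMin
  congr 1

theorem orderIso_val_congr {M : ℕ} (s t : Finset (Fin M)) (hst : s = t) (m m' : Fin M)
    (hmm : m = m') (hm : m ∈ s) (hm' : m' ∈ t) :
    (((s.orderIsoOfFin rfl).symm ⟨m, hm⟩ : Fin s.card)).val
      = (((t.orderIsoOfFin rfl).symm ⟨m', hm'⟩ : Fin t.card)).val := by
  subst hst
  subst hmm
  rfl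

theorem matOf_det_cf {M : ℕ} {x x' : Fin M → A} (h : matOf x = matOf x') : cf x = cf x' := by
  have hbm : blockMin x = blockMin x' := matOf_det_blockMin h
  funext j
  unfold cf
  apply congrArg eA
  apply Fin.ext
  simp only [Fin.coe_castLE]
  unfold rankIdx
  apply orderIso_val_congr
  · unfold img
    rw [hbm]
  · rw [hbm]

theorem matOf_det_bOf {M : ℕ} {x x' : Fin M → A} (h : matOf x = matOf x') : bOf x = bOf x' := by
  rw [← card_img x, ← card_img x']
  unfold img
  rw [matOf_det_blockMin h]

noncomputable def PRE (b : ℕ) : Finset A :=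
  Finset.image (fun t => eA t) (Finset.univ.filter (fun t : Fin (Fintype.card A) => t.val < b))

theorem rankIdx_surj {M : ℕ} (x : Fin M → A) (t : Fin (img x).card) : ∃ j, rankIdx x j = t := by
  have hm : (((img x).orderIsoOfFin rfl) t).val ∈ img x := (((img x).orderIsoOfFin rfl) t).2
  obtain ⟨j, _, hj⟩ := Finset.mem_image.mp hm
  refine ⟨j, ?_⟩
  have he : (⟨blockMin x j, blockMin_mem_img x j⟩ : {y // y ∈ img x}) = ((img x).orderIsoOfFin rfl) t :=
    Subtype.ext hj
  unfold rankIdx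
  rw [he]
  exact OrderIso.symm_apply_apply _ _

theorem image_cf {M : ℕ} (x : Fin M → A) : Finset.image (cf x) Finset.univ = PRE (bOf x) := by
  have hle : (img x).card ≤ Fintype.card A := le_trans (le_of_eq (card_img x)) (bOf_le_card x)
  ext a
  constructor
  · intro ha
    obtain ⟨j, _, rfl⟩ := Finset.mem_image.mp ha
    apply Finset.mem_image.mpr
    refine ⟨Fin.castLE hle (rankIdx x j), Finset.mem_filter.mpr ⟨Finset.mem_univ _, ?_⟩, rfl⟩
    rw [Fin.coe_castLE]
    exact lt_of_lt_of_le (rankIdx x j).isLt (le_of_eq (card_img x))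
  · intro ha
    obtain ⟨t, htmem, rfl⟩ := Finset.mem_image.mp ha
    have ht := (Finset.mem_filter.mp htmem).2
    have htb : t.val < (img x).card := by
      rw [card_img x]
      exact ht
    obtain ⟨j, hj⟩ := rankIdx_surj x ⟨t.val, htb⟩
    apply Finset.mem_image.mpr
    refine ⟨j, Finset.mem_univ _, ?_⟩
    unfold cf
    rw [hj]
    exact congrArg eA (Fin.ext rfl)

noncomputable def Stab (b : ℕ) : Finset (Equiv.Perm A) :=
  Finset.univ.filter (fun σ₀ => ∀ a ∈ PRE (A := A) b, σ₀ a ∈ PRE (A := A) b)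

theorem one_mem_Stab (b : ℕ) : (1 : Equiv.Perm A) ∈ Stab (A := A) b := by
  simp [Stab]

theorem stab_image {b : ℕ} {σ₀ : Equiv.Perm A} (h : σ₀ ∈ Stab (A := A) b) :
    (PRE (A := A) b).image σ₀ = PRE b := by
  apply Finset.eq_of_subset_of_card_le
  · intro a ha
    obtain ⟨a', ha', rfl⟩ := Finset.mem_image.mp ha
    exact (Finset.mem_filter.mp h).2 a' ha'
  · rw [Finset.card_image_of_injective _ σ₀.injective]

variable {N : ℕ}

noncomputable def Orb (f : (Fin N → A) → A) (x : Fin N → A) : Finset ((Equiv.Perm A) → A) :=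
  (Stab (A := A) (bOf x)).image (fun σ₀ => fun s => f (fun j => s (σ₀ (cf x j))))

theorem matOf_det_Orb (f : (Fin N → A) → A) {x x' : Fin N → A} (h : matOf x = matOf x') :
    Orb f x = Orb f x' := by
  unfold Orb
  rw [matOf_det_bOf h, matOf_det_cf h]

theorem F_mem_Orb (f : (Fin N → A) → A) (x : Fin N → A) :
    (fun s : Equiv.Perm A => f (fun j => s (cf x j))) ∈ Orb f x := by
  refine Finset.mem_image.mpr ⟨1, one_mem_Stab _, ?_⟩
  funext s
  simp

theorem image_eq_of_pointwise {M : ℕ} {x : Fin M → A} {σ : Equiv.Perm A} {y : Fin M → A}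
    (h : ∀ i, x i = σ (y i)) :
    Finset.image x Finset.univ = (Finset.image y Finset.univ).image σ := by
  have : x = fun i => σ (y i) := funext h
  rw [this, Finset.image_image]
  rfl

theorem relate (f : (Fin N → A) → A) {x x' : Fin N → A}
    (hb : bOf x' = bOf x) (hO : Orb f x' = Orb f x) :
    ∃ s : Equiv.Perm A,
      (∀ u : Equiv.Perm A, f (fun i => u (x' i)) = f (fun i => u (s (x i))))
      ∧ Finset.image x' Finset.univ = (Finset.image x Finset.univ).image s := by
  classical
  have hmem := F_mem_Orb f x'
  rw [hO] at hmem
  obtain ⟨σ₀, hσ₀, heq⟩ := Finset.mem_image.mp hmem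
  obtain ⟨σ, hσ⟩ := matOf_exists_perm (cf x) x (matOf_cf x)
  obtain ⟨σ', hσ'⟩ := matOf_exists_perm (cf x') x' (matOf_cf x')
  refine ⟨σ' * σ₀ * σ⁻¹, fun u => ?_, ?_⟩
  · have e1 : f (fun i => u (x' i)) = f (fun i => (u * σ') (cf x' i)) := by
      congr 1; funext i; rw [hσ' i]; rfl
    have e2 := congrFun heq (u * σ')
    have e3 : ∀ i, cf x i = σ⁻¹ (x i) := by
      intro i
      rw [hσ i]
      simp
    rw [e1, ← e2]
    congr 1
    funext i
    rw [e3 i]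
    simp [Equiv.Perm.mul_apply]
  · have i1 : Finset.image x' Finset.univ = (Finset.image (cf x') Finset.univ).image σ' :=
      image_eq_of_pointwise hσ'
    have i2 : Finset.image x Finset.univ = (Finset.image (cf x) Finset.univ).image σ :=
      image_eq_of_pointwise hσ
    rw [i1, i2, image_cf, image_cf, hb, Finset.image_image]
    symm
    have h1 : Finset.image (⇑(σ' * σ₀ * σ⁻¹) ∘ ⇑σ) (PRE (A := A) (bOf x))
        = Finset.image (⇑σ' ∘ ⇑σ₀) (PRE (A := A) (bOf x)) := by
      apply Finset.image_congr
      intro a _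
      simp [Equiv.Perm.mul_apply]
    have h2 : Finset.image (⇑σ' ∘ ⇑σ₀) (PRE (A := A) (bOf x))
        = Finset.image ⇑σ' (Finset.image ⇑σ₀ (PRE (A := A) (bOf x))) :=
      (Finset.image_image (g := ⇑σ') (f := ⇑σ₀)).symm
    rw [h1, h2, stab_image hσ₀]

theorem card_image_le_of_factor {α β γ : Type*} [DecidableEq α] [DecidableEq β] [DecidableEq γ]
    (s : Finset α) (p : α → β) (q : α → γ)
    (h : ∀ x ∈ s, ∀ y ∈ s, p x = p y → q x = q y) :
    (s.image q).card ≤ (s.image p).card := by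
  classical
  by_cases hs : s.Nonempty
  · obtain ⟨x₀, hx₀⟩ := hs
    set g : β → γ := fun c => if hb : ∃ x ∈ s, p x = c then q hb.choose else q x₀ with hg
    have himg : s.image q = (s.image p).image g := by
      ext c
      simp only [Finset.mem_image]
      constructor
      · rintro ⟨x, hx, rfl⟩
        refine ⟨p x, ⟨x, hx, rfl⟩, ?_⟩
        have hb : ∃ y ∈ s, p y = p x := ⟨x, hx, rfl⟩
        rw [hg]
        simp only [hb, dif_pos]
        obtain ⟨hy1, hy2⟩ := hb.choose_spec
        exact h _ hy1 _ hx hy2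
      · rintro ⟨c', ⟨x, hx, rfl⟩, rfl⟩
        have hb : ∃ y ∈ s, p y = p x := ⟨x, hx, rfl⟩
        rw [hg]
        simp only [hb, dif_pos]
        obtain ⟨hy1, _⟩ := hb.choose_spec
        exact ⟨_, hy1, rfl⟩
    rw [himg]
    exact Finset.card_image_le
  · rw [Finset.not_nonempty_iff_eq_empty.mp hs]
    simp

theorem card_PRE {b : ℕ} (hb : b ≤ Fintype.card A) : (PRE (A := A) b).card = b := by
  classical
  unfold PRE
  rw [Finset.card_image_of_injective _ eA.injective]
  have : Finset.univ.filter (fun t : Fin (Fintype.card A) => t.val < b)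
      = Finset.image (Fin.castLE hb) Finset.univ := by
    ext t
    rw [Finset.mem_filter, Finset.mem_image]
    constructor
    · rintro ⟨_, ht⟩
      exact ⟨⟨t.val, ht⟩, Finset.mem_univ _, Fin.ext rfl⟩
    · rintro ⟨t', _, rfl⟩
      refine ⟨Finset.mem_univ _, ?_⟩
      simpa using t'.isLt
  rw [this, Finset.card_image_of_injective _ (Fin.castLE_injective hb)]
  simp

theorem PRE_card_eq_univ : PRE (A := A) (Fintype.card A) = Finset.univ := by
  apply Finset.eq_univ_of_card
  rw [card_PRE le_rfl]

theorem Orb_congr {N : ℕ} (f : (Fin N → A) → A) {x x' : Fin N → A} (hb : bOf x = bOf x')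
    (hF : ∀ s : Equiv.Perm A, f (fun j => s (cf x j)) = f (fun j => s (cf x' j))) :
    Orb f x = Orb f x' := by
  unfold Orb
  rw [hb]
  apply Finset.image_congr
  intro σ₀ _
  funext s
  exact hF (s * σ₀)

/-- arithmetic: `dA` facts -/
def dA (A : Type) [Fintype A] : ℕ :=
  Fintype.card A ^ Fintype.card A - Fintype.card A ^ (Fintype.card A - 1) + 1

theorem nat_pow_sub (k : ℕ) (hk : 2 ≤ k) : k ^ k - k ^ (k - 1) = k ^ (k - 1) * (k - 1) := by
  have hkk : k ^ k = k ^ (k - 1) * k := by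
    have h : k - 1 + 1 = k := by omega
    calc k ^ k = k ^ ((k - 1) + 1) := by rw [h]
    _ = k ^ (k - 1) * k := pow_succ _ _
  have h1 : k ^ (k - 1) * (k - 1) + k ^ (k - 1) = k ^ (k - 1) * k := by
    rw [← Nat.mul_succ]
    congr 1
    omega
  omega

theorem dA_eq (hk : 2 ≤ Fintype.card A) :
    dA A = Fintype.card A ^ (Fintype.card A - 1) * (Fintype.card A - 1) + 1 := by
  unfold dA
  rw [nat_pow_sub _ hk]

theorem nat_P_ge (k : ℕ) (hk : 2 ≤ k) : k ≤ k ^ (k - 1) := by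
  calc k = k ^ 1 := (pow_one k).symm
  _ ≤ k ^ (k - 1) := Nat.pow_le_pow_right (by omega) (by omega)

theorem k_le_dA (hk : 2 ≤ Fintype.card A) : Fintype.card A ≤ dA A := by
  rw [dA_eq hk]
  have hP := nat_P_ge (Fintype.card A) hk
  have : Fintype.card A ^ (Fintype.card A - 1) * 1
      ≤ Fintype.card A ^ (Fintype.card A - 1) * (Fintype.card A - 1) :=
    Nat.mul_le_mul_left _ (by omega)
  omega

theorem three_le_dA (hk : 2 ≤ Fintype.card A) : 3 ≤ dA A := by
  have h1 := k_le_dA (A := A) hk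
  rw [dA_eq hk] at h1 ⊢
  have hP := nat_P_ge (Fintype.card A) hk
  have : Fintype.card A ^ (Fintype.card A - 1) * 1
      ≤ Fintype.card A ^ (Fintype.card A - 1) * (Fintype.card A - 1) :=
    Nat.mul_le_mul_left _ (by omega)
  omega

theorem desc_le_factorial (k b : ℕ) (hb : b ≤ k) : k.descFactorial b ≤ k.factorial := by
  rw [← Nat.factorial_mul_descFactorial hb]
  exact Nat.le_mul_of_pos_left _ (Nat.factorial_pos _)

theorem k_le_two_pow (k : ℕ) (hk : 1 ≤ k) : k ≤ 2 ^ (k - 1) := by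
  have h := Nat.lt_two_pow_self (n := k - 1)
  omega

theorem factorial_le_aux (k : ℕ) (hk : 3 ≤ k) : k.factorial ≤ k ^ (k - 1) - 1 := by
  induction k with
  | zero => omega
  | succ n ih =>
    rcases Nat.lt_or_ge n 3 with h | h
    · have : n = 2 := by omega
      subst this
      decide
    · have hih := ih (by omega)
      have h1 : (n + 1).factorial = (n + 1) * n.factorial := rfl
      have h2 : n ^ (n - 1) ≥ 1 := Nat.one_le_pow _ _ (by omega)
      have h3 : (n + 1) * n.factorial ≤ (n + 1) * (n ^ (n - 1) - 1) := Nat.mul_le_mul_left _ hih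
      have h4 : (n + 1) * (n ^ (n - 1) - 1) = (n + 1) * n ^ (n - 1) - (n + 1) := by
        rw [Nat.mul_sub]
        omega
      have h5 : (n + 1) * n ^ (n - 1) ≤ (n + 1) * (n + 1) ^ (n - 1) :=
        Nat.mul_le_mul_left _ (Nat.pow_le_pow_left (by omega) _)
      have h6 : (n + 1) * (n + 1) ^ (n - 1) = (n + 1) ^ n := by
        rw [← pow_succ']
        congr 1
        omega
      have h7 : (n + 1) ^ n ≥ n + 1 := by
        calc n + 1 = (n + 1) ^ 1 := (pow_one _).symm
        _ ≤ (n + 1) ^ n := Nat.pow_le_pow_right (by omega) (by omega)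
      simp only [Nat.add_sub_cancel]
      omega

theorem main_arith (k b : ℕ) (hk : 3 ≤ k) (hb2 : 2 ≤ b) (hbk : b ≤ k) (d : ℕ)
    (hd : d = k ^ (k - 1) * (k - 1) + 1) :
    k ^ (k.descFactorial b) ≤ b ^ (d - b) := by
  have s1 : k ^ (k.descFactorial b) ≤ (2 ^ (k - 1)) ^ (k.descFactorial b) :=
    Nat.pow_le_pow_left (k_le_two_pow k (by omega)) _
  have s2 : (2 ^ (k - 1)) ^ (k.descFactorial b) = 2 ^ ((k - 1) * k.descFactorial b) :=
    (pow_mul 2 (k - 1) (k.descFactorial b)).symm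
  have s3 : (k - 1) * k.descFactorial b ≤ (k - 1) * k.factorial :=
    Nat.mul_le_mul_left _ (desc_le_factorial k b hbk)
  have s4 : (k - 1) * k.factorial ≤ (k - 1) * (k ^ (k - 1) - 1) :=
    Nat.mul_le_mul_left _ (factorial_le_aux k hk)
  have s5 : (k - 1) * (k ^ (k - 1) - 1) ≤ d - k := by
    have hp : 1 ≤ k ^ (k - 1) := Nat.one_le_pow _ _ (by omega)
    have : (k - 1) * (k ^ (k - 1) - 1) = (k - 1) * k ^ (k - 1) - (k - 1) := by
      rw [Nat.mul_sub]
      omega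
    rw [this, hd]
    have hkp : k ≤ k ^ (k - 1) := by
      calc k = k ^ 1 := (pow_one _).symm
      _ ≤ _ := Nat.pow_le_pow_right (by omega) (by omega)
    have hcomm : (k - 1) * k ^ (k - 1) = k ^ (k - 1) * (k - 1) := Nat.mul_comm _ _
    have h2 : k - 1 ≥ 2 := by omega
    have h3 : k ^ (k - 1) * 2 ≤ k ^ (k - 1) * (k - 1) := Nat.mul_le_mul_left _ h2
    omega
  have s6 : 2 ^ (d - k) ≤ b ^ (d - k) := Nat.pow_le_pow_left hb2 _
  have s7 : b ^ (d - k) ≤ b ^ (d - b) := Nat.pow_le_pow_right (by omega) (by omega)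
  calc k ^ (k.descFactorial b) ≤ 2 ^ ((k - 1) * k.descFactorial b) := by rw [← s2]; exact s1
  _ ≤ 2 ^ ((k - 1) * (k ^ (k - 1) - 1)) := Nat.pow_le_pow_right (by omega) (le_trans s3 s4)
  _ ≤ 2 ^ (d - k) := Nat.pow_le_pow_right (by omega) s5
  _ ≤ b ^ (d - b) := le_trans s6 s7

noncomputable def XB (N b : ℕ) : Finset (Fin N → A) :=
  Finset.univ.filter (fun x => bOf x = b)

noncomputable def OV {N : ℕ} (f : (Fin N → A) → A) (b : ℕ) :
    Finset (Finset ((Equiv.Perm A) → A)) := (XB N b).image (Orb f)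

noncomputable def KD (b : ℕ) : Finset (Fin (dA A) → Fin (dA A) → Bool) :=
  (XB (A := A) (dA A) b).image (matOf (M := dA A))

theorem mem_KD {b : ℕ} {ν : Fin (dA A) → Fin (dA A) → Bool} (h : ν ∈ KD (A := A) b) :
    ∃ y : Fin (dA A) → A, matOf y = ν ∧ bOf y = b := by
  obtain ⟨y, hy, rfl⟩ := Finset.mem_image.mp h
  exact ⟨y, rfl, (Finset.mem_filter.mp hy).2⟩

theorem KD_det {b b' : ℕ} {ν : Fin (dA A) → Fin (dA A) → Bool}
    (h : ν ∈ KD (A := A) b) (h' : ν ∈ KD (A := A) b') : b = b' := by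
  obtain ⟨y, hy, hby⟩ := mem_KD h
  obtain ⟨y', hy', hby'⟩ := mem_KD h'
  rw [← hby, ← hby']
  exact matOf_det_bOf (hy.trans hy'.symm)

noncomputable def totOf (b : ℕ) (u : ↥(PRE (A := A) b) ↪ A) : A → A :=
  fun a => if h : a ∈ PRE (A := A) b then u ⟨a, h⟩ else a

theorem totOf_injOn (b : ℕ) (u : ↥(PRE (A := A) b) ↪ A) :
    Set.InjOn (totOf b u) (PRE (A := A) b) := by
  intro a ha a' ha' hh
  have ha2 := Finset.mem_coe.mp ha
  have ha2' := Finset.mem_coe.mp ha'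
  simp only [totOf] at hh
  rw [dif_pos ha2, dif_pos ha2'] at hh
  have := u.injective hh
  exact congrArg Subtype.val this

noncomputable def extEmb (b : ℕ) (u : ↥(PRE (A := A) b) ↪ A) : Equiv.Perm A :=
  (ext_perm (PRE (A := A) b) (totOf b u) (totOf_injOn b u)).choose

theorem extEmb_spec (b : ℕ) (u : ↥(PRE (A := A) b) ↪ A) (a : A) (ha : a ∈ PRE (A := A) b) :
    extEmb b u a = u ⟨a, ha⟩ := by
  have h := (ext_perm (PRE (A := A) b) (totOf b u) (totOf_injOn b u)).choose_spec a ha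
  rw [totOf, dif_pos ha] at h
  exact h

theorem cf_mem_PRE {N : ℕ} {x : Fin N → A} {b : ℕ} (hx : bOf x = b) (j : Fin N) :
    cf x j ∈ PRE (A := A) b := by
  rw [← hx, ← image_cf x]
  exact Finset.mem_image_of_mem _ (Finset.mem_univ j)

noncomputable def RESfun {N : ℕ} (f : (Fin N → A) → A) (b : ℕ) (x : Fin N → A) :
    (↥(PRE (A := A) b) ↪ A) → A :=
  fun u => f (fun j => extEmb b u (cf x j))

theorem RESfun_det {N : ℕ} (f : (Fin N → A) → A) {b : ℕ} {x x' : Fin N → A}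
    (hx : bOf x = b) (hx' : bOf x' = b) (h : RESfun f b x = RESfun f b x') :
    Orb f x = Orb f x' := by
  apply Orb_congr f (hx.trans hx'.symm)
  intro s
  set u : ↥(PRE (A := A) b) ↪ A :=
    ⟨fun a => s a.val, fun a a' hh => Subtype.ext (s.injective hh)⟩ with hu
  have hagree : ∀ (a : A) (ha : a ∈ PRE (A := A) b), extEmb b u a = s a := by
    intro a ha
    rw [extEmb_spec b u a ha]
    rfl
  calc f (fun j => s (cf x j)) = f (fun j => extEmb b u (cf x j)) := by
        congr 1
        funext j
        rw [hagree _ (cf_mem_PRE hx j)]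
  _ = RESfun f b x u := rfl
  _ = RESfun f b x' u := by rw [h]
  _ = f (fun j => s (cf x' j)) := by
        show f (fun j => extEmb b u (cf x' j)) = _
        congr 1
        funext j
        rw [hagree _ (cf_mem_PRE hx' j)]

theorem card_filter_lt (M b : ℕ) (hb : b ≤ M) :
    (Finset.univ.filter (fun t : Fin M => t.val < b)).card = b := by
  have : Finset.univ.filter (fun t : Fin M => t.val < b)
      = Finset.image (Fin.castLE hb) Finset.univ := by
    ext t
    rw [Finset.mem_filter, Finset.mem_image]
    constructor
    · rintro ⟨_, ht⟩
      exact ⟨⟨t.val, ht⟩, Finset.mem_univ _, Fin.ext rfl⟩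
    · rintro ⟨t', _, rfl⟩
      refine ⟨Finset.mem_univ _, ?_⟩
      simpa using t'.isLt
  rw [this, Finset.card_image_of_injective _ (Fin.castLE_injective hb)]
  simp

theorem pow_le_card_KD (hk : 2 ≤ Fintype.card A) {b : ℕ} (hb1 : 1 ≤ b)
    (hbk : b ≤ Fintype.card A) : b ^ (dA A - b) ≤ (KD (A := A) b).card := by
  classical
  have hbd : b ≤ dA A := hbk.trans (k_le_dA hk)
  set G : ({i : Fin (dA A) // b ≤ i.val} → Fin b) → (Fin (dA A) → A) := fun g i =>
    if h : i.val < b then eA (Fin.castLE hbk ⟨i.val, h⟩)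
    else eA (Fin.castLE hbk (g ⟨i, not_lt.mp h⟩)) with hG
  have himg : ∀ g, Finset.image (G g) Finset.univ = PRE (A := A) b := by
    intro g
    ext a
    constructor
    · intro ha
      obtain ⟨i, _, rfl⟩ := Finset.mem_image.mp ha
      rw [hG]
      by_cases h : i.val < b
      · simp only [dif_pos h]
        unfold PRE
        refine Finset.mem_image.mpr ⟨_, Finset.mem_filter.mpr ⟨Finset.mem_univ _, ?_⟩, rfl⟩
        simpa using h
      · simp only [dif_neg h]
        unfold PRE
        refine Finset.mem_image.mpr ⟨_, Finset.mem_filter.mpr ⟨Finset.mem_univ _, ?_⟩, rfl⟩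
        simpa using (g ⟨i, not_lt.mp h⟩).isLt
    · intro ha
      unfold PRE at ha
      obtain ⟨t, htm, rfl⟩ := Finset.mem_image.mp ha
      have ht := (Finset.mem_filter.mp htm).2
      refine Finset.mem_image.mpr ⟨⟨t.val, lt_of_lt_of_le ht hbd⟩, Finset.mem_univ _, ?_⟩
      rw [hG]
      simp only [dif_pos ht]
      exact congrArg eA (Fin.ext rfl)
  have hbOf : ∀ g, bOf (G g) = b := by
    intro g
    unfold bOf
    rw [himg g, card_PRE hbk]
  have hinj : ∀ g g', matOf (G g) = matOf (G g') → g = g' := by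
    intro g g' hmm
    funext w
    obtain ⟨i, hbi⟩ := w
    have hlt : (g ⟨i, hbi⟩).val < b := (g ⟨i, hbi⟩).isLt
    set j : Fin (dA A) := ⟨(g ⟨i, hbi⟩).val, lt_of_lt_of_le hlt hbd⟩ with hj
    have hji : G g j = G g i := by
      rw [hG]
      have hjb : j.val < b := hlt
      have hib : ¬ i.val < b := not_lt.mpr hbi
      simp only [dif_pos hjb, dif_neg hib]
      exact congrArg eA (Fin.ext rfl)
    have h1 : matOf (G g) j i = true := by
      unfold matOf
      simpa using hji
    have h2 : matOf (G g') j i = true := by rw [← hmm]; exact h1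
    have hji' : G g' j = G g' i := by
      unfold matOf at h2
      simpa using h2
    rw [hG] at hji'
    have hjb : j.val < b := hlt
    have hib : ¬ i.val < b := not_lt.mpr hbi
    simp only [dif_pos hjb, dif_neg hib] at hji'
    have h3 := eA.injective hji'
    have h4 : j.val = (g' ⟨i, hbi⟩).val := by
      have := congrArg Fin.val h3
      simpa using this
    apply Fin.ext
    rw [← h4]
  calc b ^ (dA A - b) = Fintype.card ({i : Fin (dA A) // b ≤ i.val} → Fin b) := by
        rw [Fintype.card_fun]
        congr 1
        · simp
        · rw [Fintype.card_subtype]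
          have := card_filter_lt (dA A) b hbd
          have hsplit := Finset.card_filter_add_card_filter_not
            (s := (Finset.univ : Finset (Fin (dA A)))) (p := fun t => t.val < b)
          have huniv : (Finset.univ : Finset (Fin (dA A))).card = dA A := by simp
          have heq : (Finset.univ.filter (fun t : Fin (dA A) => ¬ t.val < b)).card
              = (Finset.univ.filter (fun t : Fin (dA A) => b ≤ t.val)).card := by
            congr 1
            ext t
            simp [not_lt]
          omega
  _ ≤ (KD (A := A) b).card := by
        apply Finset.card_le_card_of_injOn (fun g => matOf (G g))
        · intro g _
          unfold KD
          refine Finset.mem_image.mpr ⟨G g, Finset.mem_filter.mpr ⟨Finset.mem_univ _, hbOf g⟩, rfl⟩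
        · intro g _ g' _ h
          exact hinj g g' h

theorem count_ge3 {N : ℕ} (hk3 : 3 ≤ Fintype.card A) (f : (Fin N → A) → A) (b : ℕ)
    (hb2 : 2 ≤ b) (hbk : b ≤ Fintype.card A) : (OV f b).card ≤ (KD (A := A) b).card := by
  classical
  have hk : 2 ≤ Fintype.card A := by omega
  have step1 : (OV f b).card ≤ ((XB N b).image (RESfun f b)).card := by
    show ((XB N b).image (Orb f)).card ≤ _
    apply card_image_le_of_factor
    intro x hx y hy hpq
    exact RESfun_det f (Finset.mem_filter.mp hx).2 (Finset.mem_filter.mp hy).2 hpq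
  have step2 : ((XB N b).image (RESfun f b)).card
      ≤ Fintype.card ((↥(PRE (A := A) b) ↪ A) → A) := by
    rw [← Finset.card_univ]
    exact Finset.card_le_card (Finset.subset_univ _)
  have step3 : Fintype.card ((↥(PRE (A := A) b) ↪ A) → A)
      = Fintype.card A ^ (Fintype.card A).descFactorial b := by
    rw [Fintype.card_fun, Fintype.card_embedding_eq, Fintype.card_coe, card_PRE hbk]
  have step4 := main_arith (Fintype.card A) b hk3 hb2 hbk (dA A) (dA_eq hk)
  have step5 := pow_le_card_KD (A := A) hk (le_trans (by omega) hb2) hbk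
  omega

theorem count_b1 {N : ℕ} (f : (Fin N → A) → A) (hk : 2 ≤ Fintype.card A) :
    (OV f 1).card ≤ (KD (A := A) 1).card := by
  classical
  have hkpos : 0 < Fintype.card A := by omega
  have h1 : (OV f 1).card ≤ 1 := by
    apply Finset.card_le_one.mpr
    intro O hO O' hO'
    obtain ⟨x, hx, rfl⟩ := Finset.mem_image.mp hO
    obtain ⟨x', hx', rfl⟩ := Finset.mem_image.mp hO'
    have hbx := (Finset.mem_filter.mp hx).2
    have hbx' := (Finset.mem_filter.mp hx').2
    apply Orb_congr f (hbx.trans hbx'.symm)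
    intro s
    congr 1
    funext j
    congr 1
    apply congrArg eA
    apply Fin.ext
    rw [Fin.coe_castLE, Fin.coe_castLE]
    have i1 : (rankIdx x j).val = 0 := by
      have h := (rankIdx x j).isLt
      have hc := card_img x
      omega
    have i2 : (rankIdx x' j).val = 0 := by
      have h := (rankIdx x' j).isLt
      have hc := card_img x'
      omega
    rw [i1, i2]
  have h2 : 1 ≤ (KD (A := A) 1).card := by
    have hd3 := three_le_dA (A := A) hk
    have hne : (0 : ℕ) < dA A := by omega
    set a0 : A := eA ⟨0, hkpos⟩ with ha0
    set y : Fin (dA A) → A := fun _ => a0 with hy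
    have hb : bOf y = 1 := by
      unfold bOf
      have himg : Finset.image y Finset.univ = {a0} := by
        apply Finset.eq_singleton_iff_unique_mem.mpr
        constructor
        · exact Finset.mem_image_of_mem _ (Finset.mem_univ ⟨0, hne⟩)
        · intro a ha
          obtain ⟨i, _, rfl⟩ := Finset.mem_image.mp ha
          rfl
      rw [himg, Finset.card_singleton]
    apply Finset.card_pos.mpr
    exact ⟨matOf y, Finset.mem_image.mpr ⟨y, Finset.mem_filter.mpr ⟨Finset.mem_univ _, hb⟩, rfl⟩⟩
  omega

section Ktwo

variable (hk2 : Fintype.card A = 2)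
include hk2

theorem a0_ne_a1 : eA (A := A) ⟨0, by omega⟩ ≠ eA ⟨1, by omega⟩ := by
  intro h
  have := eA.injective h
  have := congrArg Fin.val this
  simp at this

theorem hall (a : A) : a = eA ⟨0, by omega⟩ ∨ a = eA ⟨1, by omega⟩ := by
  have h : a = eA (eA.symm a) := (Equiv.apply_symm_apply _ _).symm
  have hlt : (eA.symm a).val < 2 := by
    have := (eA.symm a).isLt
    omega
  rcases (by omega : (eA.symm a).val = 0 ∨ (eA.symm a).val = 1) with h0 | h0
  · left
    rw [h]
    exact congrArg eA (Fin.ext h0)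
  · right
    rw [h]
    exact congrArg eA (Fin.ext h0)

theorem perm_cases (s : Equiv.Perm A) :
    s = 1 ∨ s = Equiv.swap (eA (A := A) ⟨0, by omega⟩) (eA ⟨1, by omega⟩) := by
  set a0 : A := eA ⟨0, by omega⟩ with ha0
  set a1 : A := eA ⟨1, by omega⟩ with ha1
  have hne : a0 ≠ a1 := a0_ne_a1 hk2
  rcases hall hk2 (s a0) with h0 | h0
  · left
    apply Equiv.ext
    intro a
    rcases hall hk2 a with rfl | rfl
    · simpa using h0
    · rcases hall hk2 (s a1) with h1 | h1
      · exact absurd (s.injective (h1.trans h0.symm)) (Ne.symm hne)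
      · simpa using h1
  · right
    apply Equiv.ext
    intro a
    rcases hall hk2 a with rfl | rfl
    · rw [h0, Equiv.swap_apply_left]
    · rcases hall hk2 (s a1) with h1 | h1
      · rw [h1, Equiv.swap_apply_right]
      · exact absurd (s.injective (h0.trans h1.symm)) hne

theorem PRE_two_univ : PRE (A := A) 2 = Finset.univ := by
  rw [← hk2]
  exact PRE_card_eq_univ

theorem Stab_two_univ : Stab (A := A) 2 = Finset.univ := by
  unfold Stab
  apply Finset.filter_true_of_mem
  intro σ₀ _
  intro a _
  rw [PRE_two_univ hk2]
  exact Finset.mem_univ _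

end Ktwo

noncomputable def Fraw {N : ℕ} (f : (Fin N → A) → A) (x : Fin N → A) : Equiv.Perm A → A :=
  fun s => f (fun j => s (cf x j))

theorem Orb_twist {N : ℕ} (f : (Fin N → A) → A) {x y : Fin N → A} {b : ℕ}
    (hbx : bOf x = b) (hby : bOf y = b) (hSuniv : Stab (A := A) b = Finset.univ)
    (σA : Equiv.Perm A) (hσσ : σA * σA = 1)
    (hc : ∀ u, Fraw f y u = Fraw f x (u * σA)) : Orb f x = Orb f y := by
  ext O
  unfold Orb
  rw [hbx, hby, hSuniv]
  simp only [Finset.mem_image]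
  constructor
  · rintro ⟨σ₀, -, rfl⟩
    refine ⟨σ₀ * σA, Finset.mem_univ _, ?_⟩
    funext s
    show Fraw f y (s * (σ₀ * σA)) = Fraw f x (s * σ₀)
    rw [hc]
    congr 1
    rw [mul_assoc, mul_assoc, hσσ, mul_one]
  · rintro ⟨σ₀, -, rfl⟩
    refine ⟨σ₀ * σA, Finset.mem_univ _, ?_⟩
    funext s
    show Fraw f x (s * (σ₀ * σA)) = Fraw f y (s * σ₀)
    rw [hc (s * σ₀), mul_assoc]

theorem count_k2 {N : ℕ} (hk2 : Fintype.card A = 2) (f : (Fin N → A) → A) :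
    (OV f 2).card ≤ (KD (A := A) 2).card := by
  classical
  have hk : 2 ≤ Fintype.card A := by omega
  have hkpos : (0:ℕ) < Fintype.card A := by omega
  have hk1 : (1:ℕ) < Fintype.card A := by omega
  have hne : eA (A := A) ⟨0, hkpos⟩ ≠ eA ⟨1, hk1⟩ := by
    intro h
    have h2 := congrArg Fin.val (eA.injective h)
    simp at h2
  have stepA : (OV f 2).card ≤ Fintype.card (Sym2 A) := by
    have h1 : (OV f 2).card ≤ ((XB N 2).image
        (fun x => s(Fraw f x 1, Fraw f x (Equiv.swap (eA ⟨0, hkpos⟩) (eA ⟨1, hk1⟩))))).card := by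
      show ((XB N 2).image (Orb f)).card ≤ _
      apply card_image_le_of_factor
      intro x hx y hy hpq
      have hbx := (Finset.mem_filter.mp hx).2
      have hby := (Finset.mem_filter.mp hy).2
      have hσσ : Equiv.swap (eA (A := A) ⟨0, hkpos⟩) (eA ⟨1, hk1⟩)
          * Equiv.swap (eA ⟨0, hkpos⟩) (eA ⟨1, hk1⟩) = 1 := Equiv.swap_mul_self _ _
      have hpc : ∀ u : Equiv.Perm A, u = 1 ∨ u = Equiv.swap (eA ⟨0, hkpos⟩) (eA ⟨1, hk1⟩) :=
        fun u => perm_cases hk2 u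
      rcases Sym2.eq_iff.mp hpq with ⟨e1, e2⟩ | ⟨e1, e2⟩
      · apply Orb_congr f (hbx.trans hby.symm)
        intro s
        rcases hpc s with rfl | hs
        · exact e1
        · rw [hs]
          exact e2
      · refine Orb_twist f hbx hby (Stab_two_univ hk2) _ hσσ ?_
        · intro u
          rcases hpc u with rfl | hu
          · rw [one_mul]
            exact e2.symm
          · rw [hu, hσσ]
            exact e1.symm
    have h2 : ((XB N 2).image
        (fun x => s(Fraw f x 1, Fraw f x (Equiv.swap (eA ⟨0, hkpos⟩) (eA ⟨1, hk1⟩))))).card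
        ≤ Fintype.card (Sym2 A) := by
      exact le_trans (Finset.card_le_card (Finset.subset_univ _)) (le_of_eq Finset.card_univ)
    omega
  have stepB : Fintype.card (Sym2 A) = 3 := by
    rw [Sym2.card, hk2]
    decide
  have stepC : 3 ≤ (KD (A := A) 2).card := by
    have hd3 := three_le_dA (A := A) hk
    have h0d : (0:ℕ) < dA A := by omega
    have h1d : (1:ℕ) < dA A := by omega
    have h2d : (2:ℕ) < dA A := by omega
    set a0 : A := eA ⟨0, hkpos⟩ with ha0
    set a1 : A := eA ⟨1, hk1⟩ with ha1
    have hbgen : ∀ y : Fin (dA A) → A, (∃ i, y i = a0) → (∃ i, y i = a1) →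
        (∀ i, y i = a0 ∨ y i = a1) → bOf y = 2 := by
      rintro y ⟨iw0, hw0⟩ ⟨iw1, hw1⟩ hall'
      unfold bOf
      have himg : Finset.image y Finset.univ = {a0, a1} := by
        apply Finset.Subset.antisymm
        · intro a ha
          obtain ⟨i, _, rfl⟩ := Finset.mem_image.mp ha
          rcases hall' i with h | h <;> simp [h]
        · intro a ha
          rcases Finset.mem_insert.mp ha with rfl | ha
          · rw [← hw0]
            exact Finset.mem_image_of_mem _ (Finset.mem_univ iw0)
          · rw [Finset.mem_singleton.mp ha, ← hw1]
            exact Finset.mem_image_of_mem _ (Finset.mem_univ iw1)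
      rw [himg, Finset.card_pair hne]
    set y1 : Fin (dA A) → A := fun i => if i.val = 0 then a0 else a1 with hy1
    set y2 : Fin (dA A) → A := fun i => if i.val ≤ 1 then a0 else a1 with hy2
    set y3 : Fin (dA A) → A := fun i => if i.val = 0 ∨ i.val = 2 then a0 else a1 with hy3
    have hb1 : bOf y1 = 2 := by
      apply hbgen
      · exact ⟨⟨0, h0d⟩, by rw [hy1]; simp⟩
      · exact ⟨⟨1, h1d⟩, by rw [hy1]; simp⟩
      · intro i
        rw [hy1]
        by_cases h : i.val = 0 <;> simp [h]
    have hb2 : bOf y2 = 2 := by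
      apply hbgen
      · exact ⟨⟨0, h0d⟩, by rw [hy2]; simp⟩
      · exact ⟨⟨2, h2d⟩, by rw [hy2]; simp⟩
      · intro i
        rw [hy2]
        by_cases h : i.val ≤ 1 <;> simp [h]
    have hb3 : bOf y3 = 2 := by
      apply hbgen
      · exact ⟨⟨0, h0d⟩, by rw [hy3]; simp⟩
      · exact ⟨⟨1, h1d⟩, by rw [hy3]; simp⟩
      · intro i
        rw [hy3]
        by_cases h : i.val = 0 ∨ i.val = 2 <;> simp [h]
    have hmem : ∀ y : Fin (dA A) → A, bOf y = 2 → matOf y ∈ KD (A := A) 2 := by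
      intro y hy
      exact Finset.mem_image.mpr ⟨y, Finset.mem_filter.mpr ⟨Finset.mem_univ _, hy⟩, rfl⟩
    have hval : ∀ (y y' : Fin (dA A) → A) (i j : Fin (dA A)),
        matOf y = matOf y' → (y i = y j ↔ y' i = y' j) := by
      intro y y' i j h
      exact matOf_iff h i j
    have e12 : matOf y1 ≠ matOf y2 := by
      intro h
      have := (hval _ _ ⟨0, h0d⟩ ⟨1, h1d⟩ h).mpr (by rw [hy2]; simp)
      rw [hy1] at this
      simp at this
      exact hne this
    have e13 : matOf y1 ≠ matOf y3 := by
      intro h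
      have := (hval _ _ ⟨0, h0d⟩ ⟨2, h2d⟩ h).mpr (by rw [hy3]; simp)
      rw [hy1] at this
      simp at this
      exact hne this
    have e23 : matOf y2 ≠ matOf y3 := by
      intro h
      have := (hval _ _ ⟨0, h0d⟩ ⟨1, h1d⟩ h).mp (by rw [hy2]; simp)
      rw [hy3] at this
      simp at this
      exact hne this
    have hsub : ({matOf y1, matOf y2, matOf y3} : Finset (Fin (dA A) → Fin (dA A) → Bool))
        ⊆ KD (A := A) 2 := by
      intro ν hν
      rcases Finset.mem_insert.mp hν with rfl | hν
      · exact hmem _ hb1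
      rcases Finset.mem_insert.mp hν with rfl | hν
      · exact hmem _ hb2
      rw [Finset.mem_singleton.mp hν]
      exact hmem _ hb3
    have hcard : ({matOf y1, matOf y2, matOf y3} : Finset (Fin (dA A) → Fin (dA A) → Bool)).card = 3 :=
      Finset.card_eq_three.mpr ⟨_, _, _, e12, e13, e23, rfl⟩
    calc (3:ℕ) = _ := hcard.symm
    _ ≤ (KD (A := A) 2).card := Finset.card_le_card hsub
  omega

theorem count {N : ℕ} (hk : 2 ≤ Fintype.card A) (f : (Fin N → A) → A) {b : ℕ}
    (hb1 : 1 ≤ b) (hbk : b ≤ Fintype.card A) : (OV f b).card ≤ (KD (A := A) b).card := by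
  rcases Nat.lt_or_ge b 2 with hb | hb
  · have : b = 1 := by omega
    subst this
    exact count_b1 f hk
  rcases Nat.lt_or_ge (Fintype.card A) 3 with hk3 | hk3
  · have hk2 : Fintype.card A = 2 := by omega
    have hb2 : b = 2 := by omega
    subst hb2
    exact count_k2 hk2 f
  · exact count_ge3 hk3 f b hb hbk

theorem exists_c {M : ℕ} (xh : Fin M → A) (yh : Fin (dA A) → A)
    (hb : bOf yh = bOf xh) :
    ∃ c : Fin (dA A) → A, matOf c = matOf yh ∧
      Finset.image c Finset.univ = Finset.image xh Finset.univ := by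
  classical
  have hcard : Fintype.card ↥(Finset.image yh Finset.univ)
      = Fintype.card ↥(Finset.image xh Finset.univ) := by
    rw [Fintype.card_coe, Fintype.card_coe]
    exact hb
  set e2 := Fintype.equivOfCardEq hcard with he2
  set s1 : Equiv.Perm A := Equiv.extendSubtype e2 with hs1
  refine ⟨fun i => s1 (yh i), matOf_perm_comp yh s1, ?_⟩
  have himg : Finset.image (fun i => s1 (yh i)) Finset.univ
      = (Finset.image yh Finset.univ).image s1 := image_eq_of_pointwise (fun i => rfl)
  rw [himg]
  apply Finset.eq_of_subset_of_card_le
  · intro a ha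
    obtain ⟨a', ha', rfl⟩ := Finset.mem_image.mp ha
    exact Equiv.extendSubtype_mem e2 a' ha'
  · rw [Finset.card_image_of_injective _ s1.injective]
    exact le_of_eq hb.symm

theorem main_encode {N : ℕ} [NeZero N] (hk : 2 ≤ Fintype.card A) (f : (Fin N → A) → A) :
    ∃ (pos : (Fin N → Fin N → Bool) → Fin (dA A) → Fin N)
      (tau : (Fin (dA A) → Fin (dA A) → Bool) → Fin N → Fin (dA A)),
      ∀ x : Fin N → A,
        f (fun j => x (pos (matOf x) (tau (matOf (fun i => x (pos (matOf x) i))) j))) = f x := by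
  classical
  have hkpos : 0 < Fintype.card A := by omega
  have hdpos : 0 < dA A := by have := three_le_dA (A := A) hk; omega
  have hNpos : 0 < N := Nat.pos_of_ne_zero (NeZero.ne N)
  -- embeddings
  have hembf : ∀ b : ℕ, ∃ F : Finset ((Equiv.Perm A) → A) → (Fin (dA A) → Fin (dA A) → Bool),
      (∀ O ∈ OV f b, F O ∈ KD (A := A) b) ∧
      (∀ O ∈ OV f b, ∀ O' ∈ OV f b, F O = F O' → O = O') := by
    intro b
    by_cases hb : 1 ≤ b ∧ b ≤ Fintype.card A
    · have hcard : Fintype.card ↥(OV f b) ≤ Fintype.card ↥(KD (A := A) b) := by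
        rw [Fintype.card_coe, Fintype.card_coe]
        exact count hk f hb.1 hb.2
      obtain ⟨F⟩ := Function.Embedding.nonempty_of_card_le hcard
      refine ⟨fun O => if h : O ∈ OV f b then (F ⟨O, h⟩).val else (fun _ _ => false), ?_, ?_⟩
      · intro O hO
        simp only [dif_pos hO]
        exact (F ⟨O, hO⟩).2
      · intro O hO O' hO' hFO
        simp only [dif_pos hO, dif_pos hO'] at hFO
        have := F.injective (Subtype.ext hFO)
        exact congrArg Subtype.val this
    · have hempty : OV f b = ∅ := by
        rw [Finset.eq_empty_iff_forall_notMem]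
        intro O hO
        obtain ⟨x, hx, rfl⟩ := Finset.mem_image.mp hO
        have hbx := (Finset.mem_filter.mp hx).2
        have h1 := bOf_pos x
        have h2 := bOf_le_card x
        omega
      refine ⟨fun _ => (fun _ _ => false), ?_, ?_⟩
      · intro O hO
        rw [hempty] at hO
        exact absurd hO (Finset.notMem_empty O)
      · intro O hO
        rw [hempty] at hO
        exact absurd hO (Finset.notMem_empty O)
  choose EMBF hmemEMB hinjEMB using hembf
  set LAM : (Fin N → A) → (Fin (dA A) → Fin (dA A) → Bool) :=
    fun x => EMBF (bOf x) (Orb f x) with hLAM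
  have hOVmem : ∀ x : Fin N → A, Orb f x ∈ OV f (bOf x) := by
    intro x
    exact Finset.mem_image_of_mem _ (Finset.mem_filter.mpr ⟨Finset.mem_univ _, rfl⟩)
  have hLAM_mem : ∀ x : Fin N → A, LAM x ∈ KD (A := A) (bOf x) :=
    fun x => hmemEMB (bOf x) _ (hOVmem x)
  have hLAM_det : ∀ x x' : Fin N → A, matOf x = matOf x' → LAM x = LAM x' := by
    intro x x' h
    show EMBF (bOf x) (Orb f x) = EMBF (bOf x') (Orb f x')
    rw [matOf_det_bOf h, matOf_det_Orb f h]
  have hLAM_inj : ∀ x x' : Fin N → A, LAM x = LAM x' →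
      bOf x = bOf x' ∧ Orb f x = Orb f x' := by
    intro x x' h
    have hb : bOf x = bOf x' := by
      apply KD_det (h ▸ hLAM_mem x) (hLAM_mem x')
    refine ⟨hb, ?_⟩
    apply hinjEMB (bOf x) _ (hOVmem x) _ (by rw [hb]; exact hOVmem x')
    have h' : EMBF (bOf x) (Orb f x) = EMBF (bOf x') (Orb f x') := h
    rw [← hb] at h'
    exact h'
  -- the decoding claim
  have hdec : ∀ ν : Fin (dA A) → Fin (dA A) → Bool, (∃ x : Fin N → A, LAM x = ν) →
      ∃ tau : Fin N → Fin (dA A), ∀ x : Fin N → A, LAM x = ν →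
        ∃ P : Fin (dA A) → Fin N, matOf (fun i => x (P i)) = ν ∧
          ∀ u : Equiv.Perm A,
            f (fun j => u (x (P (tau j)))) = f (fun i => u (x i)) := by
    intro ν hν
    obtain ⟨xh, hxh⟩ := hν
    have hKD : ν ∈ KD (A := A) (bOf xh) := hxh ▸ hLAM_mem xh
    obtain ⟨yh, hyh1, hyh2⟩ := mem_KD hKD
    obtain ⟨c, hc1, hc2⟩ := exists_c xh yh hyh2
    have hcν : matOf c = ν := hc1.trans hyh1
    -- tau
    have htau : ∀ j : Fin N, ∃ i : Fin (dA A), c i = xh j := by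
      intro j
      have : xh j ∈ Finset.image c Finset.univ := by
        rw [hc2]
        exact Finset.mem_image_of_mem _ (Finset.mem_univ j)
      obtain ⟨i, _, hi⟩ := Finset.mem_image.mp this
      exact ⟨i, hi⟩
    choose tau htauspec using htau
    refine ⟨tau, ?_⟩
    intro x hx
    have hrel := hLAM_inj x xh (hx.trans hxh.symm)
    obtain ⟨s, hsf, hsim⟩ := relate f (x := xh) (x' := x) hrel.1 hrel.2
    have hP : ∀ i : Fin (dA A), ∃ m : Fin N, x m = s (c i) := by
      intro i
      have h1 : c i ∈ Finset.image xh Finset.univ := by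
        rw [← hc2]
        exact Finset.mem_image_of_mem _ (Finset.mem_univ i)
      have h2 : s (c i) ∈ Finset.image x Finset.univ := by
        rw [hsim]
        exact Finset.mem_image_of_mem _ h1
      obtain ⟨m, _, hm⟩ := Finset.mem_image.mp h2
      exact ⟨m, hm⟩
    choose P hPspec using hP
    refine ⟨P, ?_, ?_⟩
    · have : (fun i => x (P i)) = fun i => s (c i) := by
        funext i
        exact hPspec i
      rw [this, matOf_perm_comp, hcν]
    · intro u
      have h1 : (fun j => u (x (P (tau j)))) = fun j => (u * s) (xh j) := by
        funext j
        rw [hPspec (tau j), htauspec j]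
        rfl
      rw [h1]
      have h2 := hsf u
      -- hsf : ∀ u, f (fun i => u (x i)) = f (fun i => u (s (xh i)))
      rw [h2]
      rfl
  -- choose data
  set junkN : Fin N := ⟨0, hNpos⟩ with hjunkN
  set junkD : Fin (dA A) := ⟨0, hdpos⟩ with hjunkD
  set TAU : (Fin (dA A) → Fin (dA A) → Bool) → Fin N → Fin (dA A) := fun ν =>
    if h : ∃ x : Fin N → A, LAM x = ν then (hdec ν h).choose else fun _ => junkD with hTAU
  set POS : (Fin N → Fin N → Bool) → Fin (dA A) → Fin N := fun μ =>
    if h : ∃ x' : Fin N → A, matOf x' = μ then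
      ((hdec (LAM h.choose) ⟨h.choose, rfl⟩).choose_spec h.choose rfl).choose
    else fun _ => junkN with hPOS
  refine ⟨POS, TAU, ?_⟩
  intro x
  have hμ : ∃ x' : Fin N → A, matOf x' = matOf x := ⟨x, rfl⟩
  set x₀ := hμ.choose with hx₀
  have hmat0 : matOf x₀ = matOf x := hμ.choose_spec
  obtain ⟨t, ht⟩ := matOf_exists_perm x₀ x hmat0
  have hPOSx : POS (matOf x)
      = ((hdec (LAM x₀) ⟨x₀, rfl⟩).choose_spec x₀ rfl).choose := by
    show (if h : ∃ x' : Fin N → A, matOf x' = matOf x then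
        ((hdec (LAM h.choose) ⟨h.choose, rfl⟩).choose_spec h.choose rfl).choose
      else fun _ => junkN) = _
    rw [dif_pos hμ]
  set ν := LAM x₀ with hν
  set tau0 := (hdec ν ⟨x₀, rfl⟩).choose with htau0
  have hspec := ((hdec ν ⟨x₀, rfl⟩).choose_spec x₀ rfl).choose_spec
  set P := ((hdec ν ⟨x₀, rfl⟩).choose_spec x₀ rfl).choose with hPdef
  have hmatP : matOf (fun i => x₀ (P i)) = ν := hspec.1
  have hfeq := hspec.2
  -- matrix of encoded x
  have hmatPx : matOf (fun i => x (POS (matOf x) i)) = ν := by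
    rw [hPOSx]
    have : (fun i => x (P i)) = fun i => t (x₀ (P i)) := by
      funext i
      exact ht (P i)
    rw [this, matOf_perm_comp]
    exact hmatP
  have hTAUx : TAU (matOf (fun i => x (POS (matOf x) i))) = tau0 := by
    rw [hmatPx]
    show (if h : ∃ x' : Fin N → A, LAM x' = ν then (hdec ν h).choose else fun _ => junkD) = _
    rw [dif_pos (⟨x₀, rfl⟩ : ∃ x' : Fin N → A, LAM x' = ν)]
  rw [hTAUx, hPOSx]
  have hgoal := hfeq t
  -- hgoal : f (fun j => t (x₀ (P (tau0 j)))) = f (fun i => t (x₀ i))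
  have e1 : (fun j => x (P (tau0 j))) = fun j => t (x₀ (P (tau0 j))) := by
    funext j
    exact ht (P (tau0 j))
  have e2 : (fun i => t (x₀ i)) = x := by
    funext i
    exact (ht i).symm
  rw [e1]
  rw [e2] at hgoal
  exact hgoal

end DiscrProof


theorem main_thm_discriminator_arity_bound {A : Type} [Fintype A] [DecidableEq A]
    (hk : 2 ≤ Fintype.card A)
    (D : Clone A) (hD1 : discOp A ∈ D.ops 2)
    (hD2 : ∀ C : Clone A, discOp A ∈ C.ops 2 → ∀ n, D.ops n ⊆ C.ops n)
    (f : Ops A) :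
    -- a d-ary operation, where d = k^k - k^(k-1) + 1 (arity index d - 1)
    ∃ g : Op A (Fintype.card A ^ Fintype.card A -
        Fintype.card A ^ (Fintype.card A - 1)),
      CEquiv D f ⟨_, g⟩ := by
  classical
  obtain ⟨n, fop⟩ := f
  haveI : NeZero (n + 1) := ⟨Nat.succ_ne_zero n⟩
  obtain ⟨pos, tau, hpt⟩ := DiscrProof.main_encode (N := n + 1) hk fop
  refine ⟨(fun y => fop (fun j => y (tau (DiscrProof.matOf y) j))), ?_, ?_⟩
  · refine ⟨fun i => fun x => x (pos (DiscrProof.matOf x) i), fun i => ?_, ?_⟩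
    · exact DiscrProof.pattern_mem D hD1 (fun m => pos m i)
    · funext x
      exact (hpt x).symm
  · refine ⟨fun j => fun y => y (tau (DiscrProof.matOf y) j), fun j => ?_, rfl⟩
    exact DiscrProof.pattern_mem D hD1 (fun m => tau m j)
end

section
/- For every discriminator clone C on a finite set A (i.e., any clone containing the ternary discriminator function), the C-equivalence relation ≡_C has only finitely many classes in O_A. -/
set_option linter.unusedSectionVars false

section Aux

variable {A : Type} [Finite A] [Nonempty A] [DecidableEq A] {C : Clone A}

lemma mem_of_funeq {n : ℕ} {F G : Op A n} (h : F = G) (hF : F ∈ C.ops n) :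
    G ∈ C.ops n := h ▸ hF

lemma clone_ite_mem (hC : discOp A ∈ C.ops 2) {n : ℕ} (i j : Fin (n+1)) {F G : Op A n}
    (hF : F ∈ C.ops n) (hG : G ∈ C.ops n) :
    (fun x => if x i = x j then F x else G x) ∈ C.ops n := by
  classical
  have inner : ∀ {H : Op A n}, H ∈ C.ops n →
      (fun x => discOp A fun r => ![(fun y : Fin (n+1) → A => y i), (fun y => y j), H] r x)
        ∈ C.ops n := by
    intro H hH
    refine C.comp_mem _ _ hC ?_
    intro r
    fin_cases r <;> simp [C.proj_mem, hH]
  have outer :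
      (fun x => discOp A fun t =>
        ![(fun x => discOp A fun r => ![(fun y : Fin (n+1) → A => y i), (fun y => y j), F] r x),
          (fun x => discOp A fun r => ![(fun y : Fin (n+1) → A => y i), (fun y => y j), G] r x),
          G] t x) ∈ C.ops n := by
    refine C.comp_mem _ _ hC ?_
    intro t
    fin_cases t <;> simp only [Matrix.cons_val_zero, Matrix.cons_val_one, Matrix.head_cons,
      Matrix.cons_val_two, Matrix.tail_cons]
    · exact inner hF
    · exact inner hG
    · exact hG
  refine mem_of_funeq ?_ outer
  funext x
  simp only [discOp, Matrix.cons_val_zero, Matrix.cons_val_one, Matrix.head_cons,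
    Matrix.cons_val_two, Matrix.tail_cons, Fin.isValue]
  by_cases hx : x i = x j
  · simp only [hx, if_pos rfl]
    by_cases hFG : F x = G x <;> simp [hFG]
  · simp [hx]

lemma sel_mem_aux (hC : discOp A ∈ C.ops 2) {n : ℕ}
    (l : List (Fin (n+1) × Fin (n+1))) (s : (Fin (n+1) → A) → Fin (n+1))
    (hs : ∀ x y, (∀ p ∈ l, (x p.1 = x p.2 ↔ y p.1 = y p.2)) → s x = s y) :
    (fun x => x (s x)) ∈ C.ops n := by
  classical
  induction l generalizing s with
  | nil =>
      have h : (fun x : Fin (n+1) → A => x (s x))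
          = fun x => x (s fun _ => Classical.arbitrary A) := by
        funext x
        rw [hs x (fun _ => Classical.arbitrary A) (by simp)]
      rw [h]
      exact C.proj_mem n _
  | cons p l ih =>
      set T : (Fin (n+1) → A) → (Fin (n+1) × Fin (n+1)) → Prop :=
        fun x q => q ∈ l ∧ x q.1 = x q.2 with hT
      have Teq : ∀ {x y : Fin (n+1) → A},
          (∀ q ∈ l, (x q.1 = x q.2 ↔ y q.1 = y q.2)) → T x = T y := by
        intro x y h
        funext q
        apply propext
        constructor <;> rintro ⟨hq, h2⟩
        · exact ⟨hq, (h q hq).mp h2⟩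
        · exact ⟨hq, (h q hq).mpr h2⟩
      have Tmem : ∀ {x y : Fin (n+1) → A}, T y = T x → ∀ q ∈ l,
          (x q.1 = x q.2 ↔ y q.1 = y q.2) := by
        intro x y hxy q hq
        have := congrFun hxy q
        constructor
        · intro h2
          exact ((this ▸ (⟨hq, h2⟩ : T x q)) : T y q).2
        · intro h2
          exact ((this.symm ▸ (⟨hq, h2⟩ : T y q)) : T x q).2
      -- sT for the branch x p.1 = x p.2, sF for the other branch
      set sT : (Fin (n+1) → A) → Fin (n+1) := fun x =>
        if h : ∃ y, T y = T x ∧ y p.1 = y p.2 then s (Classical.choose h) else 0 with hsT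
      set sF : (Fin (n+1) → A) → Fin (n+1) := fun x =>
        if h : ∃ y, T y = T x ∧ ¬ y p.1 = y p.2 then s (Classical.choose h) else 0 with hsF
      have hsTinv : ∀ x y, (∀ q ∈ l, (x q.1 = x q.2 ↔ y q.1 = y q.2)) → sT x = sT y := by
        intro x y h
        simp only [hsT]
        rw [Teq h]
      have hsFinv : ∀ x y, (∀ q ∈ l, (x q.1 = x q.2 ↔ y q.1 = y q.2)) → sF x = sF y := by
        intro x y h
        simp only [hsF]
        rw [Teq h]
      have hkeyT : ∀ x, x p.1 = x p.2 → s x = sT x := by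
        intro x hx
        have hex : ∃ y, T y = T x ∧ y p.1 = y p.2 := ⟨x, rfl, hx⟩
        simp only [hsT]
        rw [dif_pos hex]
        obtain ⟨hTy, hy⟩ := Classical.choose_spec hex
        apply hs
        intro q hq
        rcases List.mem_cons.mp hq with hq | hq
        · subst hq; exact iff_of_true hx hy
        · exact Tmem hTy q hq
      have hkeyF : ∀ x, ¬ x p.1 = x p.2 → s x = sF x := by
        intro x hx
        have hex : ∃ y, T y = T x ∧ ¬ y p.1 = y p.2 := ⟨x, rfl, hx⟩
        simp only [hsF]
        rw [dif_pos hex]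
        obtain ⟨hTy, hy⟩ := Classical.choose_spec hex
        apply hs
        intro q hq
        rcases List.mem_cons.mp hq with hq | hq
        · subst hq; exact iff_of_false hx hy
        · exact Tmem hTy q hq
      have hmem := clone_ite_mem hC p.1 p.2 (ih sT hsTinv) (ih sF hsFinv)
      refine mem_of_funeq ?_ hmem
      funext x
      by_cases hx : x p.1 = x p.2
      · simp only [if_pos hx]
        exact congrArg x (hkeyT x hx).symm
      · simp only [if_neg hx]
        exact congrArg x (hkeyF x hx).symm

lemma sel_mem (hC : discOp A ∈ C.ops 2) {n : ℕ} (s : (Fin (n+1) → A) → Fin (n+1))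
    (hs : ∀ x y : Fin (n+1) → A, (∀ i j, x i = x j ↔ y i = y j) → s x = s y) :
    (fun x => x (s x)) ∈ C.ops n := by
  refine sel_mem_aux hC ((List.finRange (n+1)).product (List.finRange (n+1))) s ?_
  intro x y h
  exact hs x y fun i j => h (i, j) (List.pair_mem_product.mpr ⟨List.mem_finRange i, List.mem_finRange j⟩)

/-- The invariant: the set of `Fin (Nat.card A)`-indexed minors of `f`. -/
noncomputable def phi {A : Type} [Finite A] (f : Ops A) : Set ((Fin (Nat.card A) → A) → A) :=
  Set.range (fun c : Fin (f.1+1) → Fin (Nat.card A) => fun v => f.2 (v ∘ c))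


lemma minor_of_phi_subset (hC : discOp A ∈ C.ops 2) {f g : Ops A}
    (hsub : phi f ⊆ phi g) : Minor C f g := by
  classical
  obtain ⟨nf, F⟩ := f
  obtain ⟨ng, G⟩ := g
  simp only [phi] at hsub
  set k := Nat.card A with hk
  let e : Fin k ≃ A := (Finite.equivFin A).symm
  set m := nf + 1 with hm
  set m' := ng + 1 with hm'
  -- canonical constructions from a kernel K
  let cOf : (Fin m → Fin m → Prop) → (Fin m → Fin k) := fun K =>
    if h : ∃ c : Fin m → Fin k, ∀ i j, (c i = c j ↔ K i j) then Classical.choose h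
    else fun _ => e.symm (Classical.arbitrary A)
  let dOf : (Fin m → Fin m → Prop) → (Fin m' → Fin k) := fun K =>
    if h : ∃ d : Fin m' → Fin k, (fun v => G (v ∘ d)) = (fun v => F (v ∘ cOf K)) then
      Classical.choose h
    else fun _ => e.symm (Classical.arbitrary A)
  let sOf : (Fin m → Fin m → Prop) → (Fin m' → Fin m) := fun K => fun i' =>
    if h : ∃ i : Fin m, cOf K i = dOf K i' then Classical.choose h else 0
  refine ⟨fun i' => fun x => x (sOf (fun i j => x i = x j) i'), ?_, ?_⟩
  · intro i'
    apply sel_mem hC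
    intro x y hxy
    have hK : (fun i j => x i = x j) = (fun i j => y i = y j) := by
      funext i j
      exact propext (hxy i j)
    rw [hK]
  · funext x
    set K : Fin m → Fin m → Prop := fun i j => x i = x j with hKdef
    have hK : ∃ c : Fin m → Fin k, ∀ i j, (c i = c j ↔ K i j) := by
      refine ⟨fun i => e.symm (x i), fun i j => ?_⟩
      simp only [K, EmbeddingLike.apply_eq_iff_eq]
    set c := cOf K with hc
    have Pc : ∀ i j, c i = c j ↔ x i = x j := by
      have : cOf K = Classical.choose hK := dif_pos hK
      rw [hc, this]
      exact Classical.choose_spec hK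
    have hmem : (fun v : Fin k → A => F (v ∘ c)) ∈
        Set.range (fun d : Fin m' → Fin k => fun v : Fin k → A => G (v ∘ d)) :=
      hsub ⟨c, rfl⟩
    have hd : ∃ d : Fin m' → Fin k, (fun v => G (v ∘ d)) = (fun v => F (v ∘ cOf K)) := by
      obtain ⟨d, hdd⟩ := hmem
      exact ⟨d, by rw [← hc]; exact hdd⟩
    set d := dOf K with hdc
    have Pd : (fun v : Fin k → A => G (v ∘ d)) = (fun v => F (v ∘ c)) := by
      have : dOf K = Classical.choose hd := dif_pos hd
      rw [hdc, this, hc]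
      exact Classical.choose_spec hd
    set s := sOf K with hsc
    -- a lift v : Fin k → A with v ∘ c = x
    let v : Fin k → A := fun p => if hp : ∃ i, c i = p then x (Classical.choose hp) else e p
    have hvc : ∀ i, v (c i) = x i := by
      intro i
      have hp : ∃ i', c i' = c i := ⟨i, rfl⟩
      have : v (c i) = x (Classical.choose hp) := dif_pos hp
      rw [this]
      exact (Pc _ _).mp (Classical.choose_spec hp)
    -- the adjusted lift w
    let w : Fin k → A := fun p => if ∃ i, c i = p then v p else x 0
    have hwc : ∀ i, w (c i) = x i := by
      intro i
      have : w (c i) = v (c i) := if_pos ⟨i, rfl⟩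
      rw [this, hvc]
    have hxs : ∀ i', x (s i') = w (d i') := by
      intro i'
      by_cases hh : ∃ i : Fin m, c i = d i'
      · have hs1 : s i' = Classical.choose hh := by
          rw [hsc]
          simp only [sOf]
          rw [← hc, ← hdc] -- may be unnecessary
          exact dif_pos hh
        have hcs : c (s i') = d i' := by rw [hs1]; exact Classical.choose_spec hh
        rw [← hcs, hwc]
      · have hs1 : s i' = 0 := by
          rw [hsc]
          simp only [sOf]
          rw [← hc, ← hdc]
          exact dif_neg hh
        have hw : w (d i') = x 0 := if_neg hh
        rw [hs1, hw]
    calc F x = F (w ∘ c) := by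
            congr 1
            funext i
            exact (hwc i).symm
      _ = G (w ∘ d) := (congrFun Pd w).symm
      _ = G fun i' => x (s i') := by
            congr 1
            funext i'
            exact (hxs i').symm

lemma cequiv_of_phi_eq (hC : discOp A ∈ C.ops 2) {f g : Ops A}
    (h : phi f = phi g) : CEquiv C f g :=
  ⟨minor_of_phi_subset hC h.le, minor_of_phi_subset hC h.ge⟩

end Aux

theorem discriminator_clone_finitely_many_classes {A : Type} [Finite A] [Nonempty A]
    [DecidableEq A] (C : Clone A) (hC : discOp A ∈ C.ops 2) :
    Finite (Quot (CEquiv C)) := by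
  classical
  let R : Ops A → Ops A → Prop := fun f g => phi f = phi g
  have hQfin : Finite (Quot R) := by
    have hinj : Function.Injective (Quot.lift phi (fun _ _ h => h) : Quot R → _) := by
      intro a b
      induction a using Quot.ind with | _ fa =>
      induction b using Quot.ind with | _ fb =>
      intro hab
      exact Quot.sound hab
    exact Finite.of_injective _ hinj
  have hsurj : Function.Surjective
      (Quot.lift (Quot.mk (CEquiv C)) (fun f g hfg => Quot.sound (cequiv_of_phi_eq hC hfg))
        : Quot R → Quot (CEquiv C)) := by
    intro q
    induction q using Quot.ind with | _ f =>
    exact ⟨Quot.mk R f, rfl⟩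
  exact Finite.of_surjective _ hsurj
end

section
/- Let A = {0,1}, M the clone of monotone Boolean functions, and f_n(x_1,...,x_n) = x_1 + x_2 + ⋯ + x_n (sum mod 2). Then f_m ≤_M f_n if and only if m ≤ n. Consequently the f_n lie in pairwise distinct M-equivalence classes and ≡_M has infinite index. -/
/-- The parity (sum mod 2) function of arity `n + 1` on `Fin 2`. -/
def parity (n : ℕ) : Op (Fin 2) n := fun x => ∑ i, x i

theorem monotone_clone_parity {M : Clone (Fin 2)}
    (hM : ∀ n, M.ops n = {f : Op (Fin 2) n | Monotone f}) :
    (∀ m n : ℕ, Minor M ⟨m, parity m⟩ ⟨n, parity n⟩ ↔ m ≤ n) ∧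
    (∀ m n : ℕ, m ≠ n → ¬ CEquiv M ⟨m, parity m⟩ ⟨n, parity n⟩) ∧
    Infinite (Quot (CEquiv M)) := by
  have key : ∀ m n : ℕ, Minor M ⟨m, parity m⟩ ⟨n, parity n⟩ ↔ m ≤ n := by
    intro m n
    constructor
    · rintro ⟨h, hmem, heq⟩
      have hmono : ∀ i, Monotone (h i) := by
        intro i
        have := hmem i
        rwa [hM] at this
      -- the increasing chain
      set c : ℕ → (Fin (m + 1) → Fin 2) := fun k j => if (j : ℕ) < k then 1 else 0 with hc
      have cmono : ∀ k, c k ≤ c (k + 1) := by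
        intro k j
        simp only [hc]
        by_cases h1 : (j : ℕ) < k
        · rw [if_pos h1, if_pos (by omega)]
        · rw [if_neg h1]
          exact Fin.zero_le _
      have heq' : ∀ x, parity m x = parity n fun i => h i x := fun x => congrFun heq x
      -- parity along the chain flips at each step
      have hflip : ∀ k, k < m + 1 → parity m (c (k + 1)) = parity m (c k) + 1 := by
        intro k hk
        have hpt : ∀ j : Fin (m + 1),
            c (k + 1) j = c k j + (if j = ⟨k, hk⟩ then 1 else 0) := by
          intro j
          by_cases hjk : j = ⟨k, hk⟩
          · subst hjk; simp [hc]
          · have hne : (j : ℕ) ≠ k := fun e => hjk (Fin.ext e)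
            rw [if_neg hjk, add_zero]
            simp only [hc]
            rw [if_congr (show (j : ℕ) < k + 1 ↔ (j : ℕ) < k by omega) rfl rfl]
        have hsum1 : (∑ j : Fin (m + 1),
            if j = (⟨k, hk⟩ : Fin (m + 1)) then (1 : Fin 2) else 0) = 1 := by
          simp
        simp only [parity]
        calc ∑ j, c (k + 1) j
            = ∑ j, (c k j + if j = (⟨k, hk⟩ : Fin (m + 1)) then (1 : Fin 2) else 0) :=
              Finset.sum_congr rfl fun j _ => hpt j
          _ = (∑ j, c k j) + ∑ j : Fin (m + 1),
                (if j = (⟨k, hk⟩ : Fin (m + 1)) then (1 : Fin 2) else 0) :=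
              Finset.sum_add_distrib
          _ = (∑ j, c k j) + 1 := by rw [hsum1]
      -- weight function
      set w : ℕ → ℕ := fun k => ∑ i : Fin (n + 1), ((h i (c k)) : ℕ) with hw
      have wlt : ∀ k, k < m + 1 → w k < w (k + 1) := by
        intro k hk
        have hle : ∀ i : Fin (n + 1), h i (c k) ≤ h i (c (k + 1)) :=
          fun i => hmono i (cmono k)
        have hex : ∃ i : Fin (n + 1), h i (c k) ≠ h i (c (k + 1)) := by
          by_contra hall
          push_neg at hall
          have : parity n (fun i => h i (c k)) = parity n (fun i => h i (c (k + 1))) := by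
            congr 1; funext i; exact hall i
          rw [← heq', ← heq', hflip k hk, left_eq_add] at this
          exact one_ne_zero this
        obtain ⟨i0, hi0⟩ := hex
        refine Finset.sum_lt_sum (fun i _ => ?_) ⟨i0, Finset.mem_univ i0, ?_⟩
        · exact hle i
        · exact Fin.lt_iff_val_lt_val.mp (lt_of_le_of_ne (hle i0) hi0)
      have wgrow : ∀ k, k ≤ m + 1 → k ≤ w k := by
        intro k
        induction k with
        | zero => intro _; exact Nat.zero_le _
        | succ k ih =>
          intro hk
          have h1 := ih (by omega)
          have h2 := wlt k (by omega)
          omega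
      have wbound : w (m + 1) ≤ n + 1 := by
        calc w (m + 1) ≤ ∑ _i : Fin (n + 1), 1 :=
              Finset.sum_le_sum fun i _ => Fin.is_le _
          _ = n + 1 := by simp
      have := wgrow (m + 1) le_rfl
      omega
    · intro hmn
      refine ⟨fun i => fun x => if hi : (i : ℕ) < m + 1 then x ⟨i, hi⟩ else 0, ?_, ?_⟩
      · intro i
        rw [hM]
        by_cases hi : (i : ℕ) < m + 1
        · simp only [Set.mem_setOf_eq, dif_pos hi]
          exact fun a b hab => hab _
        · simp only [Set.mem_setOf_eq, dif_neg hi]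
          exact monotone_const
      · funext x
        simp only [parity]
        set f : ℕ → Fin 2 := fun k => if hk : k < m + 1 then x ⟨k, hk⟩ else 0 with hf
        have l1 : ∑ j : Fin (m + 1), x j = ∑ j : Fin (m + 1), f j := by
          refine Finset.sum_congr rfl fun j _ => ?_
          simp only [hf]
          rw [dif_pos j.isLt]
        have l2 : (∑ i : Fin (n + 1), if hi : (i : ℕ) < m + 1 then x ⟨i, hi⟩ else 0)
            = ∑ i : Fin (n + 1), f i := rfl
        rw [l1, l2, Fin.sum_univ_eq_sum_range f, Fin.sum_univ_eq_sum_range f]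
        refine Finset.sum_subset (Finset.range_subset_range.mpr (by omega)) ?_
        intro k _ hk
        simp only [Finset.mem_range] at hk
        simp only [hf]
        rw [dif_neg (by omega)]
  have distinct : ∀ m n : ℕ, m ≠ n → ¬ CEquiv M ⟨m, parity m⟩ ⟨n, parity n⟩ := by
    rintro m n hne ⟨h1, h2⟩
    exact hne (le_antisymm ((key m n).1 h1) ((key n m).1 h2))
  refine ⟨key, distinct, ?_⟩
  refine Infinite.of_injective (fun k : ℕ => Quot.mk (CEquiv M) ⟨k, parity k⟩) ?_
  intro a b hab
  by_contra hne
  exact distinct a b hne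
    (((cequiv_equivalence M).eqvGen_iff).mp (Quot.eqvGen_exact hab))
end

section
/- Let A = {0,1}, ρ_0 = {(0,0),(0,1),(1,0)}, and R_0 the clone of Boolean functions preserving ρ_0. With f_n the n-ary parity function, f_m ≤_{R_0} f_n if and only if m ≤ n; hence ≡_{R_0} has infinitely many classes. -/
theorem rho0_clone_parity {R0 : Clone (Fin 2)}
    (hR : ∀ n, R0.ops n = {f : Op (Fin 2) n |
      ∀ a b : Fin (n + 1) → Fin 2,
        (∀ i, ¬(a i = 1 ∧ b i = 1)) → ¬(f a = 1 ∧ f b = 1)}) :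
    (∀ m n : ℕ, Minor R0 ⟨m, parity m⟩ ⟨n, parity n⟩ ↔ m ≤ n) ∧
    Infinite (Quot (CEquiv R0)) := by
  have two : ∀ a : Fin 2, a = 0 ∨ a = 1 := by decide
  have main : ∀ m n : ℕ, Minor R0 ⟨m, parity m⟩ ⟨n, parity n⟩ ↔ m ≤ n := by
    intro m n
    constructor
    · rintro ⟨h, hmem, hf⟩
      by_contra hmn
      push_neg at hmn
      -- unit vectors
      set e : Fin (m + 1) → Fin (m + 1) → Fin 2 :=
        fun j i => if i = j then 1 else 0 with he
      have hpar : ∀ j, parity m (e j) = 1 := by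
        intro j
        simp [parity, he, Finset.sum_ite_eq]
      have hone : ∀ j : Fin (m + 1), ∃ i : Fin (n + 1), h i (e j) = 1 := by
        intro j
        by_contra hc
        push_neg at hc
        have h0 : ∀ i : Fin (n + 1), h i (e j) = 0 := by
          intro i
          rcases two (h i (e j)) with h' | h'
          · exact h'
          · exact absurd h' (hc i)
        have := congrFun hf (e j)
        simp only at this
        rw [hpar j] at this
        simp [parity, h0] at this
      choose φ hφ using hone
      have hcard : Fintype.card (Fin (n + 1)) < Fintype.card (Fin (m + 1)) := by
        simp; omega
      obtain ⟨j, j', hjj', heq⟩ := Fintype.exists_ne_map_eq_of_card_lt φ hcard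
      have hmem' := hmem (φ j)
      rw [hR] at hmem'
      refine hmem' (e j) (e j') ?_ ⟨hφ j, heq ▸ hφ j'⟩
      intro i
      rintro ⟨h1, h2⟩
      simp only [he] at h1 h2
      split_ifs at h1 h2 with hij hij'
      · exact hjj' (hij.symm.trans hij')
      all_goals first
        | exact absurd h1 (by decide)
        | exact absurd h2 (by decide)
    · intro hmn
      refine ⟨fun i => fun x => if hi : (i : ℕ) < m + 1 then x ⟨i, hi⟩ else 0, ?_, ?_⟩
      · intro i
        rw [hR]
        intro a b hab
        beta_reduce
        split_ifs with hi
        · exact hab _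
        · rintro ⟨h1, _⟩; exact absurd h1 (by decide)
      · funext x
        simp only [parity]
        have key : ∀ i : Fin (m + 1),
            x i = (fun j : ℕ => if hj : j < m + 1 then x ⟨j, hj⟩ else 0) i := by
          intro i; simp [i.isLt]
        rw [Finset.sum_congr rfl (fun i _ => key i),
          Fin.sum_univ_eq_sum_range (fun j : ℕ => if hj : j < m + 1 then x ⟨j, hj⟩ else 0),
          Fin.sum_univ_eq_sum_range (fun j : ℕ => if hj : j < m + 1 then x ⟨j, hj⟩ else 0)]
        refine Finset.sum_subset (Finset.range_subset_range.2 (by omega)) ?_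
        intro j _ hj
        simp only [Finset.mem_range] at hj
        rw [dif_neg (by omega)]
  refine ⟨main, ?_⟩
  refine Infinite.of_injective (fun n => Quot.mk (CEquiv R0) ⟨n, parity n⟩) ?_
  intro a b hab
  have := Quot.eqvGen_exact hab
  replace this := (cequiv_equivalence R0).eqvGen_iff.mp this
  have h1 := (main a b).1 this.1
  have h2 := (main b a).1 this.2
  omega
end

section
/- Let T_id be the clone of idempotent Boolean functions (those fixing both constant tuples). For Boolean functions f (n-ary) and g (m-ary): f ≤_{T_id} g if and only if f(0,...,0) = g(0,...,0), f(1,...,1) = g(1,...,1), and Im(f) ⊆ Im(g). Consequently there are exactly 6 T_id-equivalence classes of Boolean functions. -/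
lemma aux_minor_iff {T : Clone (Fin 2)}
    (hT : ∀ n, T.ops n =
      {f : Op (Fin 2) n | f (fun _ => 0) = 0 ∧ f (fun _ => 1) = 1})
    (f g : Ops (Fin 2)) :
    Minor T f g ↔
      (f.2 (fun _ => 0) = g.2 (fun _ => 0) ∧ f.2 (fun _ => 1) = g.2 (fun _ => 1) ∧
        Set.range f.2 ⊆ Set.range g.2) := by
  classical
  constructor
  · rintro ⟨h, hmem, hfe⟩
    simp only [hT, Set.mem_setOf_eq] at hmem
    refine ⟨?_, ?_, ?_⟩
    · exact (congrFun hfe _).trans (congrArg g.snd (funext fun i => (hmem i).1))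
    · exact (congrFun hfe _).trans (congrArg g.snd (funext fun i => (hmem i).2))
    · rintro y ⟨x, rfl⟩
      rw [congrFun hfe x]
      exact ⟨_, rfl⟩
  · rintro ⟨h0, h1, hr⟩
    choose w hw using fun x => hr (Set.mem_range_self x)
    have hne : (fun _ : Fin (f.1 + 1) => (1 : Fin 2)) ≠ (fun _ => 0) := by
      intro hcon
      exact absurd (congrFun hcon 0) (by decide)
    refine ⟨fun i x => if x = (fun _ => 0) then 0 else if x = (fun _ => 1) then 1 else w x i,
      ?_, ?_⟩
    · intro i
      rw [hT]
      exact ⟨by simp, by simp [hne]⟩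
    · funext x
      by_cases hx0 : x = fun _ => 0
      · subst hx0
        simpa using h0
      · by_cases hx1 : x = fun _ => 1
        · subst hx1
          simpa [hne] using h1
        · simp only [if_neg hx0, if_neg hx1]
          exact (hw x).symm

/-- representatives of the six classes -/
def aux_rep : Fin 6 → Ops (Fin 2) := fun j =>
  match j with
  | ⟨0, _⟩ => ⟨0, fun _ => 0⟩
  | ⟨1, _⟩ => ⟨0, fun _ => 1⟩
  | ⟨2, _⟩ => ⟨1, fun x => x 0 + x 1⟩
  | ⟨3, _⟩ => ⟨1, fun x => 1 + x 0 + x 1⟩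
  | ⟨4, _⟩ => ⟨0, fun x => x 0⟩
  | ⟨5, _⟩ => ⟨0, fun x => x 0 + 1⟩
  | ⟨n + 6, h⟩ => absurd h (by omega)

def aux_idx (f : Ops (Fin 2)) : Fin 6 :=
  if Function.Surjective f.2 then
    if f.2 (fun _ => 0) = 0 then (if f.2 (fun _ => 1) = 1 then 4 else 2)
    else (if f.2 (fun _ => 1) = 1 then 3 else 5)
  else if f.2 (fun _ => 0) = 0 then 0 else 1

lemma aux_range_of_not_surj {n : ℕ} {f : Op (Fin 2) n} (hs : ¬ Function.Surjective f) :
    Set.range f = {f (fun _ => 0)} := by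
  ext y
  simp only [Set.mem_range, Set.mem_singleton_iff]
  constructor
  · rintro ⟨x, rfl⟩
    by_contra hne
    apply hs
    intro z
    have key : ∀ a b z : Fin 2, b ≠ a → (z = a ∨ z = b) := by decide
    rcases key _ _ z hne with h | h
    · exact ⟨_, h.symm⟩
    · exact ⟨x, h.symm⟩
  · rintro rfl
    exact ⟨_, rfl⟩

theorem Tid_minor_description {T : Clone (Fin 2)}
    (hT : ∀ n, T.ops n =
      {f : Op (Fin 2) n | f (fun _ => 0) = 0 ∧ f (fun _ => 1) = 1}) :
    (∀ f g : Ops (Fin 2), Minor T f g ↔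
      (f.2 (fun _ => 0) = g.2 (fun _ => 0) ∧ f.2 (fun _ => 1) = g.2 (fun _ => 1) ∧
        Set.range f.2 ⊆ Set.range g.2)) ∧
    Nat.card (Quot (CEquiv T)) = 6 := by
  classical
  refine ⟨aux_minor_iff hT, ?_⟩
  have equiv_iff : ∀ f g : Ops (Fin 2), CEquiv T f g ↔
      (f.2 (fun _ => 0) = g.2 (fun _ => 0) ∧ f.2 (fun _ => 1) = g.2 (fun _ => 1) ∧
        Set.range f.2 = Set.range g.2) := by
    intro f g
    rw [CEquiv, aux_minor_iff hT, aux_minor_iff hT]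
    constructor
    · rintro ⟨⟨a1, b1, r1⟩, ⟨a2, b2, r2⟩⟩
      exact ⟨a1, b1, le_antisymm r1 r2⟩
    · rintro ⟨a, b, r⟩
      exact ⟨⟨a, b, r.le⟩, ⟨a.symm, b.symm, r.ge⟩⟩
  -- key: every f is equivalent to its representative
  have key : ∀ f : Ops (Fin 2), CEquiv T (aux_rep (aux_idx f)) f := by
    intro f
    rw [equiv_iff]
    have hfin : ∀ z : Fin 2, z = 0 ∨ z = 1 := by decide
    by_cases hs : Function.Surjective f.2
    · have hru : Set.range f.2 = Set.univ := Set.range_eq_univ.mpr hs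
      rcases hfin (f.2 (fun _ => 0)) with ha | ha <;>
        rcases hfin (f.2 (fun _ => 1)) with hb | hb
      · have : aux_idx f = 2 := by
          rw [aux_idx, if_pos hs, if_pos ha, if_neg (by rw [hb]; decide)]
        rw [this]
        refine ⟨by rw [ha]; decide, by rw [hb]; decide, ?_⟩
        rw [hru]
        exact Set.range_eq_univ.mpr (by decide)
      · have : aux_idx f = 4 := by
          rw [aux_idx, if_pos hs, if_pos ha, if_pos hb]
        rw [this]
        refine ⟨by rw [ha]; decide, by rw [hb]; decide, ?_⟩
        rw [hru]
        exact Set.range_eq_univ.mpr (by decide)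
      · have : aux_idx f = 5 := by
          rw [aux_idx, if_pos hs, if_neg (by rw [ha]; decide),
            if_neg (by rw [hb]; decide)]
        rw [this]
        refine ⟨by rw [ha]; decide, by rw [hb]; decide, ?_⟩
        rw [hru]
        exact Set.range_eq_univ.mpr (by decide)
      · have : aux_idx f = 3 := by
          rw [aux_idx, if_pos hs, if_neg (by rw [ha]; decide), if_pos hb]
        rw [this]
        refine ⟨by rw [ha]; decide, by rw [hb]; decide, ?_⟩
        rw [hru]
        exact Set.range_eq_univ.mpr (by decide)
    · have hrs : Set.range f.2 = {f.2 (fun _ => 0)} := aux_range_of_not_surj hs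
      have hb : f.2 (fun _ => 1) = f.2 (fun _ => 0) := by
        have : f.2 (fun _ => 1) ∈ Set.range f.2 := ⟨_, rfl⟩
        rwa [hrs, Set.mem_singleton_iff] at this
      rcases hfin (f.2 (fun _ => 0)) with ha | ha
      · have : aux_idx f = 0 := by
          rw [aux_idx, if_neg hs, if_pos ha]
        rw [this]
        refine ⟨by rw [ha]; decide, by rw [hb, ha]; decide, ?_⟩
        rw [hrs, ha]
        exact Set.range_const
      · have : aux_idx f = 1 := by
          rw [aux_idx, if_neg hs, if_neg (by rw [ha]; decide)]
        rw [this]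
        refine ⟨by rw [ha]; decide, by rw [hb, ha]; decide, ?_⟩
        rw [hrs, ha]
        exact Set.range_const
  -- idx is constant on classes
  have hidx : ∀ f g : Ops (Fin 2), CEquiv T f g → aux_idx f = aux_idx g := by
    intro f g h
    rw [equiv_iff] at h
    obtain ⟨ha, hb, hr⟩ := h
    have hsurj : Function.Surjective f.2 ↔ Function.Surjective g.2 := by
      rw [← Set.range_eq_univ, ← Set.range_eq_univ, hr]
    simp only [aux_idx, ha, hb, hsurj]
  let F : Quot (CEquiv T) → Fin 6 := Quot.lift aux_idx hidx
  let G : Fin 6 → Quot (CEquiv T) := fun j => Quot.mk _ (aux_rep j)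
  have hGF : ∀ x, G (F x) = x := by
    apply Quot.ind
    intro f
    exact Quot.sound (key f)
  have hFG : ∀ j, F (G j) = j := by
    intro j
    show aux_idx (aux_rep j) = j
    fin_cases j <;> decide
  have e : Quot (CEquiv T) ≃ Fin 6 := ⟨F, G, hGF, hFG⟩
  rw [Nat.card_congr e, Nat.card_eq_fintype_card, Fintype.card_fin]
end

section
/- Let T_0 be the clone of Boolean functions f with f(0,...,0) = 0. For Boolean functions f, g: f ≤_{T_0} g if and only if f(0,...,0) = g(0,...,0) and Im(f) ⊆ Im(g). Consequently there are exactly 4 T_0-equivalence classes: the two constants, and the nonconstant functions with value 0 (respectively 1) at the all-zero tuple. -/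
lemma fin2_range {a b : Fin 2} (hab : a ≠ b) : ∀ c : Fin 2, c = a ∨ c = b := by
  revert a b; decide

/-- The invariant (value at 0, constancy). -/
noncomputable def inv2 (f : Ops (Fin 2)) : Fin 2 × Bool :=
  (f.2 (fun _ => 0), decide (∀ x, f.2 x = f.2 (fun _ => 0)))

lemma range_eq_iff (f g : Ops (Fin 2)) (h0 : f.2 (fun _ => 0) = g.2 (fun _ => 0)) :
    Set.range f.2 = Set.range g.2 ↔
      ((∀ x, f.2 x = f.2 (fun _ => 0)) ↔ (∀ x, g.2 x = g.2 (fun _ => 0))) := by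
  have key : ∀ (f : Ops (Fin 2)), (¬ ∀ x, f.2 x = f.2 (fun _ => 0)) →
      Set.range f.2 = Set.univ := by
    intro f hf
    push_neg at hf
    obtain ⟨x, hx⟩ := hf
    ext y
    simp only [Set.mem_univ, iff_true]
    rcases fin2_range hx y with h | h
    · exact ⟨x, h.symm⟩
    · exact ⟨fun _ => 0, h.symm⟩
  have keyc : ∀ (f : Ops (Fin 2)), (∀ x, f.2 x = f.2 (fun _ => 0)) →
      Set.range f.2 = {f.2 (fun _ => 0)} := by
    intro f hf
    ext y
    constructor
    · rintro ⟨x, rfl⟩; exact hf x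
    · rintro rfl; exact ⟨_, rfl⟩
  have sne : ∀ a : Fin 2, ({a} : Set (Fin 2)) ≠ Set.univ := by
    intro a h
    have h1 : (0 : Fin 2) = a := Set.eq_of_mem_singleton (h ▸ Set.mem_univ _)
    have h2 : (1 : Fin 2) = a := Set.eq_of_mem_singleton (h ▸ Set.mem_univ _)
    exact absurd (h1.trans h2.symm) (by decide)
  by_cases hf : ∀ x, f.2 x = f.2 (fun _ => 0) <;>
    by_cases hg : ∀ x, g.2 x = g.2 (fun _ => 0)
  · rw [keyc f hf, keyc g hg]
    exact iff_of_true (by rw [h0]) (iff_of_true hf hg)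
  · rw [keyc f hf, key g hg]
    exact iff_of_false (sne _) (fun hiff => hg (hiff.mp hf))
  · rw [key f hf, keyc g hg]
    exact iff_of_false (fun h => sne _ h.symm) (fun hiff => hf (hiff.mpr hg))
  · rw [key f hf, key g hg]
    exact iff_of_true rfl (iff_of_false hf hg)

theorem T0_minor_description {T0 : Clone (Fin 2)}
    (hT : ∀ n, T0.ops n = {f : Op (Fin 2) n | f (fun _ => 0) = 0}) :
    (∀ f g : Ops (Fin 2), Minor T0 f g ↔
      (f.2 (fun _ => 0) = g.2 (fun _ => 0) ∧ Set.range f.2 ⊆ Set.range g.2)) ∧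
    Nat.card (Quot (CEquiv T0)) = 4 := by
  classical
  have part1 : ∀ f g : Ops (Fin 2), Minor T0 f g ↔
      (f.2 (fun _ => 0) = g.2 (fun _ => 0) ∧ Set.range f.2 ⊆ Set.range g.2) := by
    intro f g
    constructor
    · rintro ⟨h, hmem, heq⟩
      constructor
      · rw [heq]
        show g.2 (fun i => h i fun _ => 0) = g.2 fun _ => 0
        refine congrArg g.2 (funext fun i => ?_)
        have := hmem i
        rw [hT] at this
        exact this
      · rintro y ⟨x, rfl⟩
        rw [heq]
        exact ⟨_, rfl⟩
    · rintro ⟨h0, hr⟩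
      have hch : ∀ x : Fin (f.1 + 1) → Fin 2, ∃ w, g.2 w = f.2 x := by
        intro x
        exact hr ⟨x, rfl⟩
      choose w hw using hch
      set w' : (Fin (f.1 + 1) → Fin 2) → (Fin (g.1 + 1) → Fin 2) :=
        fun x => if x = (fun _ => 0) then (fun _ => 0) else w x with hw'
      refine ⟨fun i x => w' x i, ?_, ?_⟩
      · intro i
        rw [hT]
        simp [hw']
      · funext x
        by_cases hx : x = (fun _ => 0)
        · subst hx
          simp only [hw', if_pos rfl]
          exact h0
        · have : (fun i => w' x i) = w x := by funext i; simp [hw', hx]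
          rw [this, hw x]
  refine ⟨part1, ?_⟩
  have equiv_iff : ∀ f g : Ops (Fin 2), CEquiv T0 f g ↔ inv2 f = inv2 g := by
    intro f g
    rw [CEquiv, part1 f g, part1 g f]
    constructor
    · rintro ⟨⟨h0, h1⟩, _, h2⟩
      have hrange : Set.range f.2 = Set.range g.2 := le_antisymm h1 h2
      exact Prod.ext h0 (decide_eq_decide.mpr ((range_eq_iff f g h0).mp hrange))
    · intro h
      have h0 : f.2 (fun _ => 0) = g.2 (fun _ => 0) := congrArg Prod.fst h
      have hrange : Set.range f.2 = Set.range g.2 :=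
        (range_eq_iff f g h0).mpr (decide_eq_decide.mp (congrArg Prod.snd h))
      exact ⟨⟨h0, hrange.le⟩, h0.symm, hrange.ge⟩
  -- the quotient map
  let q : Quot (CEquiv T0) → Fin 2 × Bool :=
    Quot.lift inv2 (fun a b h => (equiv_iff a b).mp h)
  have hbij : Function.Bijective q := by
    constructor
    · intro a b
      induction a using Quot.ind with | _ a =>
      induction b using Quot.ind with | _ b =>
      intro h
      exact Quot.sound ((equiv_iff a b).mpr h)
    · rintro ⟨v, b⟩
      have e0 : (fun _ : Fin 1 → Fin 2 => (0 : Fin 2)) (fun _ => 0) = 0 := rfl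
      match v, b with
      | 0, true =>
          refine ⟨Quot.mk _ ⟨0, fun _ => 0⟩, ?_⟩
          simp [q, inv2]
      | 1, true =>
          refine ⟨Quot.mk _ ⟨0, fun _ => 1⟩, ?_⟩
          simp [q, inv2]
      | 0, false =>
          refine ⟨Quot.mk _ ⟨0, fun x => x 0⟩, ?_⟩
          simp only [q, Quot.lift_mk, inv2]
          refine Prod.ext rfl ?_
          simp only [decide_eq_false_iff_not]
          intro h
          have := h (fun _ => 1)
          simp at this
      | 1, false =>
          refine ⟨Quot.mk _ ⟨0, fun x => 1 - x 0⟩, ?_⟩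
          simp only [q, Quot.lift_mk, inv2]
          refine Prod.ext rfl ?_
          simp only [decide_eq_false_iff_not]
          intro h
          have := h (fun _ => 1)
          simp at this
  rw [Nat.card_eq_of_bijective q hbij]
  simp [Nat.card_eq_fintype_card]
end
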